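/- arXiv:0805.0776 — 15 statements merged into one kernel-verified Lean document; each statement's English description precedes it below -/
import Mathlib

section
/- Let G be an N×N real symmetric matrix with characteristic polynomial p(λ) = a_N λ^N + ⋯ + a_1 λ + a_0, and let n ≤ N. If a_0 = a_1 = ⋯ = a_{N−n−1} = 0 and the remaining coefficients a_{N−n}, …, a_N are all nonzero and alternate in sign (that is, (−1)^{N−k} a_k > 0 for all k with N−n ≤ k ≤ N), then G is positive semidefinite and has rank exactly n. -/
open Polynomial Matrix Finset

lemma charpoly_unitary_conj {m : Type*} [Fintype m] [DecidableEq m]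
    (U : Matrix.unitaryGroup m ℝ) (D : Matrix m m ℝ) :
    ((U : Matrix m m ℝ) * D * star (U : Matrix m m ℝ)).charpoly = D.charpoly := by
  have hUV : (U : Matrix m m ℝ) * star (U : Matrix m m ℝ) = 1 :=
    Matrix.mem_unitaryGroup_iff.mp U.2
  have hc : charmatrix ((U : Matrix m m ℝ) * D * star (U : Matrix m m ℝ))
      = (C : ℝ →+* ℝ[X]).mapMatrix (U : Matrix m m ℝ) * charmatrix D
        * (C : ℝ →+* ℝ[X]).mapMatrix (star (U : Matrix m m ℝ)) := by
    unfold charmatrix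
    rw [Matrix.mul_sub, Matrix.sub_mul]
    congr 1
    · rw [← (Matrix.scalar_commute (X : ℝ[X]) (fun r' => Commute.all _ _)
        ((C : ℝ →+* ℝ[X]).mapMatrix (U : Matrix m m ℝ))).eq, mul_assoc,
        ← _root_.map_mul, hUV, _root_.map_one, mul_one]
    · rw [← _root_.map_mul, ← _root_.map_mul]
  have hdet1 : ((C : ℝ →+* ℝ[X]).mapMatrix (U : Matrix m m ℝ)
      * (C : ℝ →+* ℝ[X]).mapMatrix (star (U : Matrix m m ℝ))).det = 1 := by
    rw [← _root_.map_mul ((C : ℝ →+* ℝ[X]).mapMatrix), hUV, _root_.map_one, det_one]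
  rw [Matrix.charpoly, Matrix.charpoly, hc, det_mul, det_mul, mul_right_comm,
    ← det_mul, hdet1, one_mul]

lemma charpoly_diagonal_real {m : Type*} [Fintype m] [DecidableEq m] (d : m → ℝ) :
    (Matrix.diagonal d).charpoly = ∏ i, (X - C (d i)) := by
  rw [Matrix.charpoly]
  have h : charmatrix (Matrix.diagonal d)
      = Matrix.diagonal (fun i => (X : ℝ[X]) - C (d i)) := by
    ext i j
    by_cases h : i = j
    · subst h; simp
    · rw [charmatrix_apply_ne _ _ _ h, Matrix.diagonal_apply_ne _ h,
        Matrix.diagonal_apply_ne _ h, map_zero, neg_zero]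
  rw [h, Matrix.det_diagonal]

/-- For an `N × N` real symmetric matrix `G` with characteristic polynomial
`p(λ) = a_N λ^N + ⋯ + a_1 λ + a_0` and `n ≤ N`: if `a_0 = ⋯ = a_{N-n-1} = 0`
and the remaining coefficients `a_{N-n}, …, a_N` are nonzero and alternate in sign
(`(-1)^(N-k) a_k > 0` for `N - n ≤ k ≤ N`), then `G` is positive semidefinite and
has rank exactly `n`. -/
theorem posSemidef_and_rank_eq_of_charpoly_coeffs (N n : ℕ) (hn : n ≤ N)
    (G : Matrix (Fin N) (Fin N) ℝ) (hsymm : G.IsSymm)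
    (h0 : ∀ k, k < N - n → G.charpoly.coeff k = 0)
    (halt : ∀ k, N - n ≤ k → k ≤ N → 0 < (-1 : ℝ) ^ (N - k) * G.charpoly.coeff k) :
    G.PosSemidef ∧ G.rank = n := by
  have hG : G.IsHermitian := by
    rwa [Matrix.IsHermitian, conjTranspose_eq_transpose_of_trivial]
  -- characteristic polynomial as a product over eigenvalues
  have hof : (RCLike.ofReal ∘ hG.eigenvalues : Fin N → ℝ) = hG.eigenvalues := rfl
  have key : G.charpoly = ∏ i, (X - C (hG.eigenvalues i)) := by
    conv_lhs => rw [hG.spectral_theorem]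
    rw [Unitary.conjStarAlgAut_apply, charpoly_unitary_conj, hof, charpoly_diagonal_real]
  have hdeg : G.charpoly.natDegree = N := by
    rw [Matrix.charpoly_natDegree_eq_dim, Fintype.card_fin]
  -- the polynomial is nonzero at negative reals
  have hneg : ∀ x : ℝ, x < 0 → 0 < (-1 : ℝ) ^ N * G.charpoly.eval x := by
    intro x hx
    rw [Polynomial.eval_eq_sum_range, hdeg, Finset.mul_sum]
    have hterm : ∀ k ∈ Finset.range (N + 1),
        (-1 : ℝ) ^ N * (G.charpoly.coeff k * x ^ k)
          = ((-1 : ℝ) ^ (N - k) * G.charpoly.coeff k) * (-x) ^ k := by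
      intro k hk
      have hkN : k ≤ N := Nat.lt_succ_iff.mp (Finset.mem_range.mp hk)
      rw [neg_pow x k]
      have h1 : (-1 : ℝ) ^ (N - k) * (-1 : ℝ) ^ k = (-1 : ℝ) ^ N := by
        rw [← pow_add, Nat.sub_add_cancel hkN]
      calc (-1 : ℝ) ^ N * (G.charpoly.coeff k * x ^ k)
          = ((-1 : ℝ) ^ (N - k) * (-1 : ℝ) ^ k) * (G.charpoly.coeff k * x ^ k) := by
            rw [h1]
        _ = ((-1 : ℝ) ^ (N - k) * G.charpoly.coeff k) * ((-1 : ℝ) ^ k * x ^ k) := by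
            ring
    rw [Finset.sum_congr rfl hterm]
    have hxpos : 0 < -x := by linarith
    apply Finset.sum_pos'
    · intro k hk
      by_cases hks : k < N - n
      · rw [h0 k hks, mul_zero, zero_mul]
      · exact le_of_lt (mul_pos
          (halt k (le_of_not_gt hks) (Nat.lt_succ_iff.mp (Finset.mem_range.mp hk)))
          (pow_pos hxpos k))
    · exact ⟨N, Finset.mem_range.mpr (Nat.lt_succ_self N),
        mul_pos (halt N (Nat.sub_le _ _) le_rfl) (pow_pos hxpos N)⟩
  -- eigenvalues are nonnegative
  have heig : ∀ i, 0 ≤ hG.eigenvalues i := by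
    intro i
    by_contra h
    push_neg at h
    have hroot : G.charpoly.eval (hG.eigenvalues i) = 0 := by
      rw [key, Polynomial.eval_prod]
      refine Finset.prod_eq_zero (Finset.mem_univ i) ?_
      simp
    have := hneg _ h
    rw [hroot, mul_zero] at this
    exact lt_irrefl _ this
  have hpsd : G.PosSemidef := hG.posSemidef_iff_eigenvalues_nonneg.mpr heig
  refine ⟨hpsd, ?_⟩
  -- trailing degree is N - n
  have hp0 : G.charpoly ≠ 0 := G.charpoly_monic.ne_zero
  have htd : G.charpoly.natTrailingDegree = N - n := by
    apply le_antisymm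
    · apply Polynomial.natTrailingDegree_le_of_ne_zero
      intro h
      have := halt (N - n) le_rfl (Nat.sub_le _ _)
      rw [h, mul_zero] at this
      exact lt_irrefl _ this
    · exact Polynomial.le_natTrailingDegree hp0 h0
  -- roots are the eigenvalues
  have hroots : G.charpoly.roots = Multiset.map hG.eigenvalues Finset.univ.val := by
    rw [key]
    have h2 : ∏ i, (X - C (hG.eigenvalues i))
        = ((Multiset.map hG.eigenvalues Finset.univ.val).map fun a => X - C a).prod := by
      rw [Multiset.map_map]
      rfl
    rw [h2, roots_multiset_prod_X_sub_C]
  have hcount : (Multiset.map hG.eigenvalues Finset.univ.val).count 0 = N - n := by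
    rw [← hroots, Polynomial.count_roots, Polynomial.rootMultiplicity_eq_natTrailingDegree', htd]
  have hfilter : (Finset.univ.filter fun i => hG.eigenvalues i = 0).card = N - n := by
    rw [← hcount, Multiset.count_map]
    simp only [Finset.card, Finset.filter_val]
    congr 1
    exact Multiset.filter_congr fun i _ => by constructor <;> exact fun h => h.symm
  rw [hG.rank_eq_card_non_zero_eigs]
  have h1 : Fintype.card {i // hG.eigenvalues i ≠ 0}
      = (Finset.univ.filter fun i => hG.eigenvalues i ≠ 0).card := Fintype.card_subtype _
  have h2 : (Finset.univ.filter fun i => hG.eigenvalues i = 0).card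
      + (Finset.univ.filter fun i => hG.eigenvalues i ≠ 0).card = N := by
    rw [Finset.card_filter_add_card_filter_not, Finset.card_univ, Fintype.card_fin]
  omega
end

section
/- There exist 20 unit vectors x_1, …, x_20 in EuclideanSpace ℝ (Fin 6) such that ⟨x_i, x_j⟩ ≤ 3/14 for all i ≠ j. -/
open scoped InnerProductSpace

namespace SphCode20

def nv : Fin 6 → ℤ := ![17765, 95, 3990, 1190, 119, 2261]

def bv : ℤ := 3481940

def P : Fin 20 → Fin 6 → ℤ :=
  ![![14, 0, 0, 0, 0, 0],
    ![3, 187, 0, 0, 0, 0],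
    ![-8, 66, 22, 0, 0, 0],
    ![3, -9, -20, 38, 0, 0],
    ![3, 33, 11, -33, 110, 0],
    ![0, -70, -12, -6, 96, 24],
    ![-5, 57, -15, -3, 105, -15],
    ![-1, -123, -7, 3, -105, 15],
    ![3, 33, 11, 33, -110, 0],
    ![3, -135, -11, -9, 30, -20],
    ![3, 33, 11, 11, 33, -33],
    ![3, 33, 11, 33, 99, 11],
    ![3, 33, -23, -27, -43, 3],
    ![-6, 4, -10, 6, -96, -24],
    ![-9, 69, -11, 9, -30, 20],
    ![3, -121, 22, 0, 0, 0],
    ![3, 33, 11, -11, -33, 33],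
    ![3, 33, 11, -33, -99, -11],
    ![-9, -99, 1, 27, 43, -3],
    ![-9, -57, -2, -38, 0, 0]]

lemma hn : ∀ k, 0 ≤ nv k := by decide

lemma hnorm : ∀ i, ∑ k, P i k * P i k * nv k = bv := by decide

lemma hip : ∀ i j, i ≠ j → 14 * ∑ k, P i k * P j k * nv k ≤ 3 * bv := by decide

noncomputable def x : Fin 20 → EuclideanSpace ℝ (Fin 6) :=
  fun i => WithLp.toLp 2 (fun k => (P i k : ℝ) * Real.sqrt ((nv k : ℝ) / (bv : ℝ)))

lemma inner_eq (i j : Fin 20) :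
    ⟪x i, x j⟫_ℝ = ((∑ k, P i k * P j k * nv k : ℤ) : ℝ) / (bv : ℝ) := by
  rw [PiLp.inner_apply]
  push_cast
  rw [Finset.sum_div]
  refine Finset.sum_congr rfl fun k _ => ?_
  have h0 : (0:ℝ) ≤ (nv k : ℝ) / (bv : ℝ) := by
    apply div_nonneg
    · exact_mod_cast hn k
    · norm_num [bv]
  have : ⟪x i k, x j k⟫_ℝ
      = (P i k : ℝ) * Real.sqrt ((nv k : ℝ) / (bv : ℝ))
        * ((P j k : ℝ) * Real.sqrt ((nv k : ℝ) / (bv : ℝ))) := by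
    rw [Real.inner_apply]; rfl
  rw [this, show (P i k : ℝ) * Real.sqrt ((nv k : ℝ) / (bv : ℝ))
        * ((P j k : ℝ) * Real.sqrt ((nv k : ℝ) / (bv : ℝ)))
      = (P i k : ℝ) * (P j k : ℝ)
        * (Real.sqrt ((nv k : ℝ) / (bv : ℝ)) * Real.sqrt ((nv k : ℝ) / (bv : ℝ))) by ring,
    Real.mul_self_sqrt h0, mul_div_assoc]

end SphCode20

/-- There exist 20 unit vectors in `EuclideanSpace ℝ (Fin 6)` whose pairwise
inner products are all at most `3/14`. -/
theorem exists_spherical_code_20_points_dim6 :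
    ∃ x : Fin 20 → EuclideanSpace ℝ (Fin 6),
      (∀ i, ‖x i‖ = 1) ∧ ∀ i j, i ≠ j → ⟪x i, x j⟫_ℝ ≤ 3 / 14 := by
  refine ⟨SphCode20.x, fun i => ?_, fun i j hij => ?_⟩
  · have h : ⟪SphCode20.x i, SphCode20.x i⟫_ℝ = 1 := by
      rw [SphCode20.inner_eq, SphCode20.hnorm i]
      norm_num [SphCode20.bv]
    have h2 := real_inner_self_eq_norm_sq (SphCode20.x i)
    nlinarith [norm_nonneg (SphCode20.x i)]
  · rw [SphCode20.inner_eq]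
    have h := SphCode20.hip i j hij
    have hb : (0:ℝ) < (SphCode20.bv : ℝ) := by norm_num [SphCode20.bv]
    rw [div_le_iff₀ hb]
    have : (14:ℝ) * ((∑ k, SphCode20.P i k * SphCode20.P j k * SphCode20.nv k : ℤ) : ℝ)
        ≤ 3 * (SphCode20.bv : ℝ) := by exact_mod_cast h
    linarith
end

section
/- There exist 20 unit vectors x_1, …, x_20 in EuclideanSpace ℝ (Fin 6) such that for all i ≠ j the inner product ⟨x_i, x_j⟩ lies in the set {3/14, 0, −1/14, −5/14, −3/7, −4/7, −9/14}, and for each fixed index i there are exactly 11 indices j ≠ i with ⟨x_i, x_j⟩ = 3/14, exactly 3 indices j ≠ i with ⟨x_i, x_j⟩ = −9/14, and each of the values 0, −1/14, −5/14, −3/7, −4/7 occurs for exactly one index j ≠ i. -/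
open scoped InnerProductSpace Classical

namespace Code20

def Lm : Fin 20 → Fin 6 → ℤ := ![
  ![14, 0, 0, 0, 0, 0],
  ![-1, 65, 0, 0, 0, 0],
  ![-9, 11, 508, 0, 0, 0],
  ![3, 15, -430, 594, 0, 0],
  ![3, -41, -103, -81, 27, 0],
  ![0, 14, 162, 374, 22, 2],
  ![3, -41, -363, -29, -16, 1],
  ![-5, -39, 78, 594, 0, 0],
  ![3, 15, 25, -513, -27, 0],
  ![3, 15, 285, 451, -22, 1],
  ![-9, 11, -207, 143, 22, -1],
  ![3, 15, 285, 451, 11, -2],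
  ![3, 15, 285, -565, 16, -1],
  ![-6, 12, -84, 220, -22, -2],
  ![3, 1, -462, -314, 2, -2],
  ![3, -27, 384, -280, -2, 2],
  ![-8, -26, -78, -594, 0, 0],
  ![-9, 11, -207, 143, -11, 2],
  ![3, 15, -300, -448, 10, 2],
  ![3, -41, 222, -146, -10, -2]]

def nv : Fin 6 → ℤ := ![1634490, 75438, 693, 455, 231140, 27967940]

def Mm : Fin 20 → Fin 20 → ℤ := ![
  ![14, -1, -9, 3, 3, 0, 3, -5, 3, 3, -9, 3, 3, -6, 3, 3, -8, -9, 3, 3],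
  ![-1, 14, 3, 3, -9, 3, -9, -8, 3, 3, 3, 3, 3, 3, 0, -6, -5, 3, 3, -9],
  ![-9, 3, 14, -8, -5, 3, -9, 3, -1, 3, 3, 3, 3, 3, -9, 3, 3, 3, -6, 0],
  ![3, 3, -8, 14, -1, 3, 3, 3, -5, 3, 3, 3, -9, 3, 3, -9, -9, 3, 0, -6],
  ![3, -9, -5, -1, 14, 3, 3, 3, -8, -9, 3, 0, 3, -9, 3, 3, 3, -6, 3, 3],
  ![0, 3, 3, 3, 3, 14, -5, 3, -9, 3, 3, 3, -1, -8, -9, 3, -6, 3, 3, -9],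
  ![3, -9, -9, 3, 3, -5, 14, 3, 3, 0, -6, -9, -8, -1, 3, 3, 3, 3, 3, 3],
  ![-5, -8, 3, 3, 3, 3, 3, 14, -9, 3, 3, 3, -9, 3, -6, 0, -1, 3, -9, 3],
  ![3, 3, -1, -5, -8, -9, 3, -9, 14, 3, -9, -6, 3, 3, 3, 3, 3, 0, 3, 3],
  ![3, 3, 3, 3, -9, 3, 0, 3, 3, 14, -8, 3, -6, 3, -9, 3, -9, 3, -5, -1],
  ![-9, 3, 3, 3, 3, 3, -6, 3, -9, -8, 14, 3, 0, 3, 3, -9, 3, 3, -1, -5],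
  ![3, 3, 3, 3, 0, 3, -9, 3, -6, 3, 3, 14, 3, 3, -1, -5, -9, -8, -9, 3],
  ![3, 3, 3, -9, 3, -1, -8, -9, 3, -6, 0, 3, 14, -5, 3, 3, 3, -9, 3, 3],
  ![-6, 3, 3, 3, -9, -8, -1, 3, 3, 3, 3, 3, -5, 14, 3, -9, 0, 3, -9, 3],
  ![3, 0, -9, 3, 3, -9, 3, -6, 3, -9, 3, -1, 3, 3, 14, -8, 3, -5, 3, 3],
  ![3, -6, 3, -9, 3, 3, 3, 0, 3, 3, -9, -5, 3, -9, -8, 14, 3, -1, 3, 3],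
  ![-8, -5, 3, -9, 3, -6, 3, -1, 3, -9, 3, -9, 3, 0, 3, 3, 14, 3, 3, 3],
  ![-9, 3, 3, 3, -6, 3, 3, 3, 0, 3, 3, -8, -9, 3, -5, -1, 3, 14, 3, -9],
  ![3, 3, -6, 0, 3, 3, 3, -9, 3, -5, -1, -9, 3, -9, 3, 3, 3, 3, 14, -8],
  ![3, -9, 0, -6, 3, -9, 3, 3, 3, -1, -5, 3, 3, 3, 3, 3, 3, -9, -8, 14]]

lemma sum_eq : ∀ i j, (∑ k, nv k * Lm i k * Lm j k) = Mm i j * 22882860 := by decide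

lemma nv_nonneg : ∀ k, (0:ℤ) ≤ nv k := by decide

noncomputable def x : Fin 20 → EuclideanSpace ℝ (Fin 6) :=
  fun i => WithLp.toLp 2 (fun k => (Lm i k : ℝ) * Real.sqrt ((nv k : ℝ) / 320360040))

lemma inner_eq (i j : Fin 20) : ⟪x i, x j⟫_ℝ = (Mm i j : ℝ)/14 := by
  have h : ∀ k : Fin 6, (0:ℝ) ≤ (nv k : ℝ) / 320360040 := by
    intro k
    have := nv_nonneg k
    have h2 : (0:ℝ) ≤ (nv k : ℝ) := by exact_mod_cast this
    positivity
  have hterm : ∀ k : Fin 6,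
      (Lm i k : ℝ) * Real.sqrt ((nv k : ℝ) / 320360040) * ((Lm j k : ℝ) * Real.sqrt ((nv k : ℝ) / 320360040))
        = ((nv k * Lm i k * Lm j k : ℤ) : ℝ) / 320360040 := by
    intro k
    have hs := Real.mul_self_sqrt (h k)
    push_cast at hs ⊢
    linear_combination ((Lm i k : ℝ) * (Lm j k : ℝ)) * hs
  have hsum : ((∑ k : Fin 6, nv k * Lm i k * Lm j k : ℤ) : ℝ) = ((Mm i j * 22882860 : ℤ) : ℝ) := by
    exact congrArg (fun z : ℤ => (z : ℝ)) (sum_eq i j)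
  calc ⟪x i, x j⟫_ℝ = ∑ k : Fin 6, (x i k) * (x j k) := by
        simp [PiLp.inner_apply, RCLike.inner_apply, x, mul_comm]
    _ = ∑ k : Fin 6, ((nv k * Lm i k * Lm j k : ℤ) : ℝ) / 320360040 := by
        exact Finset.sum_congr rfl (fun k _ => hterm k)
    _ = ((∑ k : Fin 6, nv k * Lm i k * Lm j k : ℤ) : ℝ) / 320360040 := by
        rw [← Finset.sum_div]
        push_cast
        ring
    _ = (Mm i j : ℝ)/14 := by
        rw [hsum]
        push_cast
        ring

lemma norm_x (i : Fin 20) : ‖x i‖ = 1 := by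
  have hd : Mm i i = 14 := by revert i; decide
  rw [norm_eq_sqrt_real_inner (x i), inner_eq i i, hd]
  norm_num

lemma mem_vals : ∀ i j : Fin 20, i ≠ j →
    Mm i j = 3 ∨ Mm i j = 0 ∨ Mm i j = -1 ∨ Mm i j = -5 ∨ Mm i j = -6 ∨
    Mm i j = -8 ∨ Mm i j = -9 := by decide

lemma card3 : ∀ i : Fin 20, (Finset.univ.filter fun j => j ≠ i ∧ Mm i j = 3).card = 11 := by
  decide

lemma card9 : ∀ i : Fin 20, (Finset.univ.filter fun j => j ≠ i ∧ Mm i j = -9).card = 3 := by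
  decide

lemma card0 : ∀ i : Fin 20, (Finset.univ.filter fun j => j ≠ i ∧ Mm i j = 0).card = 1 := by
  decide

lemma cardm1 : ∀ i : Fin 20, (Finset.univ.filter fun j => j ≠ i ∧ Mm i j = -1).card = 1 := by
  decide

lemma cardm5 : ∀ i : Fin 20, (Finset.univ.filter fun j => j ≠ i ∧ Mm i j = -5).card = 1 := by
  decide

lemma cardm6 : ∀ i : Fin 20, (Finset.univ.filter fun j => j ≠ i ∧ Mm i j = -6).card = 1 := by
  decide

lemma cardm8 : ∀ i : Fin 20, (Finset.univ.filter fun j => j ≠ i ∧ Mm i j = -8).card = 1 := by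
  decide

lemma filter_eq (i : Fin 20) (z : ℤ) (c : ℝ) (hc : (z:ℝ)/14 = c) :
    (Finset.univ.filter fun j => j ≠ i ∧ ⟪x i, x j⟫_ℝ = c)
      = (Finset.univ.filter fun j => j ≠ i ∧ Mm i j = z) := by
  apply Finset.filter_congr
  intro j _
  rw [inner_eq i j, ← hc]
  constructor
  · rintro ⟨h1, h2⟩
    refine ⟨h1, ?_⟩
    have h3 : (Mm i j : ℝ) = (z : ℝ) := by
      field_simp at h2
      exact_mod_cast h2
    exact_mod_cast h3
  · rintro ⟨h1, h2⟩
    exact ⟨h1, by rw [h2]⟩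

end Code20

/-- There exist 20 unit vectors in `EuclideanSpace ℝ (Fin 6)` such that all pairwise
inner products lie in `{3/14, 0, -1/14, -5/14, -3/7, -4/7, -9/14}`, and from each point
the value `3/14` occurs exactly 11 times, `-9/14` exactly 3 times, and each of
`0, -1/14, -5/14, -3/7, -4/7` exactly once. -/
theorem exists_spherical_code_20_points_dim6_structure :
    ∃ x : Fin 20 → EuclideanSpace ℝ (Fin 6),
      (∀ i, ‖x i‖ = 1) ∧
      (∀ i j, i ≠ j →
        ⟪x i, x j⟫_ℝ ∈ ({3/14, 0, -1/14, -5/14, -3/7, -4/7, -9/14} : Set ℝ)) ∧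
      (∀ i, (Finset.univ.filter fun j => j ≠ i ∧ ⟪x i, x j⟫_ℝ = 3/14).card = 11) ∧
      (∀ i, (Finset.univ.filter fun j => j ≠ i ∧ ⟪x i, x j⟫_ℝ = -9/14).card = 3) ∧
      (∀ i, ∀ c ∈ ({0, -1/14, -5/14, -3/7, -4/7} : Set ℝ),
        (Finset.univ.filter fun j => j ≠ i ∧ ⟪x i, x j⟫_ℝ = c).card = 1) := by
  refine ⟨Code20.x, Code20.norm_x, ?_, ?_, ?_, ?_⟩
  · intro i j hij
    rw [Code20.inner_eq i j]
    rcases Code20.mem_vals i j hij with h | h | h | h | h | h | h <;>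
      rw [h] <;> simp only [Set.mem_insert_iff, Set.mem_singleton_iff] <;> norm_num
  · intro i
    rw [Code20.filter_eq i 3 (3/14) (by norm_num)]
    exact Code20.card3 i
  · intro i
    rw [Code20.filter_eq i (-9) (-9/14) (by norm_num)]
    exact Code20.card9 i
  · intro i c hc
    simp only [Set.mem_insert_iff, Set.mem_singleton_iff] at hc
    rcases hc with h | h | h | h | h <;> subst h
    · rw [Code20.filter_eq i 0 0 (by norm_num)]
      exact Code20.card0 i
    · rw [Code20.filter_eq i (-1) (-1/14) (by norm_num)]
      exact Code20.cardm1 i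
    · rw [Code20.filter_eq i (-5) (-5/14) (by norm_num)]
      exact Code20.cardm5 i
    · rw [Code20.filter_eq i (-6) (-3/7) (by norm_num)]
      exact Code20.cardm6 i
    · rw [Code20.filter_eq i (-8) (-4/7) (by norm_num)]
      exact Code20.cardm8 i
end

section
/- Let u = (2√5 − 1)/19 (the positive root of 19u² + 2u − 1 = 0). There exist 24 unit vectors x_1, …, x_24 in EuclideanSpace ℝ (Fin 7) such that ⟨x_i, x_j⟩ ≤ u for all i ≠ j. -/
open scoped InnerProductSpace

noncomputable section SphericalCode24Aux

private def s5 : ℝ := Real.sqrt 5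
private def ph : ℝ := (1 + s5)/2
private def ps : ℝ := (1 - s5)/2
private def uu : ℝ := (2*s5 - 1)/19
private def cA : ℝ := Real.sqrt ((11 - 3*s5)/38)
private def cB : ℝ := Real.sqrt ((9 + s5)/38)
private def cC : ℝ := Real.sqrt ((2*s5 - 1)/19)

private lemma h5 : s5 * s5 = 5 := Real.mul_self_sqrt (by norm_num)
private lemma h5nn : 0 ≤ s5 := Real.sqrt_nonneg 5
private lemma h5gt : 2 < s5 := by nlinarith [h5, h5nn]
private lemma h5lt : s5 < 3 := by nlinarith [h5, h5nn]
private lemma hu_pos : 0 < uu := by unfold uu; linarith [h5gt]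
private lemma hph : ph * ph = ph + 1 := by unfold ph; linear_combination (1/4 : ℝ) * h5
private lemma hps : ps * ps = ps + 1 := by unfold ps; linear_combination (1/4 : ℝ) * h5
private lemma hA2 : cA * cA = (11 - 3*s5)/38 := by
  unfold cA; exact Real.mul_self_sqrt (by linarith [h5lt])
private lemma hB2 : cB * cB = (9 + s5)/38 := by
  unfold cB; exact Real.mul_self_sqrt (by linarith [h5nn])
private lemma hC2 : cC * cC = uu := by
  unfold cC uu; exact Real.mul_self_sqrt (by linarith [h5gt])
private lemma hAf : cA * cA * ph = uu := by
  rw [hA2]; unfold ph uu; linear_combination (-3/76 : ℝ) * h5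
private lemma hBf : cB * cB * ps = -uu := by
  rw [hB2]; unfold ps uu; linear_combination (-1/76 : ℝ) * h5
private lemma hAn : cA * cA * (2 + ph) = s5 * uu := by
  rw [hA2]; unfold ph uu; linear_combination (-11/76 : ℝ) * h5
private lemma hBn : cB * cB * (2 + ps) = s5 * uu := by
  rw [hB2]; unfold ps uu; linear_combination (-9/76 : ℝ) * h5
private lemma hone : s5 * uu + s5 * uu + uu = 1 := by
  unfold uu; linear_combination (4/19 : ℝ) * h5

private def V : Fin 6 → Fin 3 → ℝ
  | 0, 0 => 0 | 0, 1 => 1 | 0, 2 => ph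
  | 1, 0 => 0 | 1, 1 => 1 | 1, 2 => -ph
  | 2, 0 => 1 | 2, 1 => ph | 2, 2 => 0
  | 3, 0 => 1 | 3, 1 => -ph | 3, 2 => 0
  | 4, 0 => ph | 4, 1 => 0 | 4, 2 => 1
  | 5, 0 => -ph | 5, 1 => 0 | 5, 2 => 1

private def W : Fin 6 → Fin 3 → ℝ
  | 0, 0 => 0 | 0, 1 => 1 | 0, 2 => ps
  | 1, 0 => 0 | 1, 1 => 1 | 1, 2 => -ps
  | 2, 0 => 1 | 2, 1 => ps | 2, 2 => 0
  | 3, 0 => 1 | 3, 1 => -ps | 3, 2 => 0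
  | 4, 0 => ps | 4, 1 => 0 | 4, 2 => 1
  | 5, 0 => -ps | 5, 1 => 0 | 5, 2 => 1

private def yv (i : Fin 6) (s t : ℝ) : EuclideanSpace ℝ (Fin 7) :=
  (WithLp.equiv 2 (Fin 7 → ℝ)).symm
    ![s*cA*V i 0, s*cA*V i 1, s*cA*V i 2, t*cB*W i 0, t*cB*W i 1, t*cB*W i 2, s*t*cC]

private lemma inner_yv (i j : Fin 6) (s t s' t' : ℝ) :
    ⟪yv i s t, yv j s' t'⟫_ℝ =
      (s*s') * (cA*cA) * (V i 0 * V j 0 + V i 1 * V j 1 + V i 2 * V j 2)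
      + (t*t') * (cB*cB) * (W i 0 * W j 0 + W i 1 * W j 1 + W i 2 * W j 2)
      + (s*s'*(t*t')) * (cC*cC) := by
  simp [yv, PiLp.inner_apply, RCLike.inner_apply, Fin.sum_univ_succ,
    Matrix.cons_val_zero, Matrix.cons_val_succ]
  ring

private lemma pat_diagV (i : Fin 6) :
    V i 0 * V i 0 + V i 1 * V i 1 + V i 2 * V i 2 = 2 + ph := by
  fin_cases i <;> simp [V] <;> linear_combination hph

private lemma pat_diagW (i : Fin 6) :
    W i 0 * W i 0 + W i 1 * W i 1 + W i 2 * W i 2 = 2 + ps := by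
  fin_cases i <;> simp [W] <;> linear_combination hps

private def E : Fin 6 → Fin 6 → ℝ
  | 0, 1 => -1 | 0, 3 => -1
  | 1, 0 => -1 | 1, 3 => -1 | 1, 4 => -1 | 1, 5 => -1
  | 2, 3 => -1 | 2, 5 => -1
  | 3, 0 => -1 | 3, 1 => -1 | 3, 2 => -1 | 3, 5 => -1
  | 4, 1 => -1 | 4, 5 => -1
  | 5, 1 => -1 | 5, 2 => -1 | 5, 3 => -1 | 5, 4 => -1
  | _, _ => 1

set_option maxHeartbeats 2000000 in
private lemma E_pm (i j : Fin 6) : E i j = 1 ∨ E i j = -1 := by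
  fin_cases i <;> fin_cases j <;> norm_num [E] <;> first | exact Or.inl rfl | exact Or.inr rfl

set_option maxHeartbeats 2000000 in
private lemma patV (i j : Fin 6) (h : i ≠ j) :
    V i 0 * V j 0 + V i 1 * V j 1 + V i 2 * V j 2 = E i j * ph := by
  fin_cases i <;> fin_cases j <;>
    first
    | exact absurd rfl h
    | (simp [V, E] <;> first | ring1 | linear_combination -hph | linear_combination hph)

set_option maxHeartbeats 2000000 in
private lemma patW (i j : Fin 6) (h : i ≠ j) :
    W i 0 * W j 0 + W i 1 * W j 1 + W i 2 * W j 2 = E i j * ps := by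
  fin_cases i <;> fin_cases j <;>
    first
    | exact absurd rfl h
    | (simp [W, E] <;> first | ring1 | linear_combination -hps | linear_combination hps)

private lemma ineq_off (i j : Fin 6) (hij : i ≠ j) (s t s' t' : ℝ)
    (hs : s = 1 ∨ s = -1) (ht : t = 1 ∨ t = -1)
    (hs' : s' = 1 ∨ s' = -1) (ht' : t' = 1 ∨ t' = -1) :
    ⟪yv i s t, yv j s' t'⟫_ℝ ≤ uu := by
  rw [inner_yv, patV i j hij, patW i j hij]
  rcases E_pm i j with hε | hε <;> rw [hε] <;>
    rcases hs with rfl|rfl <;> rcases ht with rfl|rfl <;> rcases hs' with rfl|rfl <;>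
    rcases ht' with rfl|rfl <;>
    nlinarith [hAf, hBf, hC2, hu_pos]

private lemma ineq_diag (i : Fin 6) (s t s' t' : ℝ)
    (hs : s = 1 ∨ s = -1) (ht : t = 1 ∨ t = -1)
    (hs' : s' = 1 ∨ s' = -1) (ht' : t' = 1 ∨ t' = -1)
    (hne : ¬(s = s' ∧ t = t')) :
    ⟪yv i s t, yv i s' t'⟫_ℝ ≤ uu := by
  rw [inner_yv, pat_diagV, pat_diagW]
  rcases hs with rfl|rfl <;> rcases ht with rfl|rfl <;> rcases hs' with rfl|rfl <;>
    rcases ht' with rfl|rfl <;>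
    first
    | nlinarith [hAn, hBn, hC2, hu_pos, h5gt]
    | exact absurd ⟨rfl, rfl⟩ hne

private lemma norm_yv (i : Fin 6) (s t : ℝ)
    (hs : s = 1 ∨ s = -1) (ht : t = 1 ∨ t = -1) : ‖yv i s t‖ = 1 := by
  have h2 := real_inner_self_eq_norm_mul_norm (yv i s t)
  have h1 : ⟪yv i s t, yv i s t⟫_ℝ = 1 := by
    rw [inner_yv, pat_diagV, pat_diagW]
    rcases hs with rfl|rfl <;> rcases ht with rfl|rfl <;>
      linear_combination hAn + hBn + hC2 + hone
  rw [h2] at h1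
  have h3 : (‖yv i s t‖ - 1) * (‖yv i s t‖ + 1) = 0 := by linear_combination h1
  rcases mul_eq_zero.mp h3 with h | h
  · linarith
  · linarith [norm_nonneg (yv i s t)]

private def sg : ℕ → ℝ := fun n => if n % 2 = 0 then 1 else -1

private lemma sgpm (n : ℕ) : sg n = 1 ∨ sg n = -1 := by
  unfold sg; split
  · exact Or.inl rfl
  · exact Or.inr rfl

private lemma sginj (m n : ℕ) (h : sg m = sg n) : m % 2 = n % 2 := by
  by_cases hm : m % 2 = 0 <;> by_cases hn : n % 2 = 0 <;>
    norm_num [sg, hm, hn] at h <;> omega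

end SphericalCode24Aux

/-- Let `u = (2√5 - 1)/19`, the positive root of `19u² + 2u - 1 = 0`. There exist
24 unit vectors in `EuclideanSpace ℝ (Fin 7)` whose pairwise inner products are all
at most `u`. -/
theorem exists_spherical_code_24_points_dim7 :
    ∀ u : ℝ, u = (2 * Real.sqrt 5 - 1) / 19 →
      ∃ x : Fin 24 → EuclideanSpace ℝ (Fin 7),
        (∀ i, ‖x i‖ = 1) ∧ ∀ i j, i ≠ j → ⟪x i, x j⟫_ℝ ≤ u := by
  intro u hu
  refine ⟨fun k => yv ⟨(k : ℕ)/4, by omega⟩ (sg k) (sg ((k : ℕ)/2)), ?_, ?_⟩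
  · intro k
    exact norm_yv _ _ _ (sgpm _) (sgpm _)
  · intro i j hij
    rw [hu]
    show _ ≤ uu
    by_cases hc : ((i : ℕ)/4) = ((j : ℕ)/4)
    · simp only [hc]
      apply ineq_diag _ _ _ _ _ (sgpm _) (sgpm _) (sgpm _) (sgpm _)
      rintro ⟨h1, h2⟩
      have e1 := sginj _ _ h1
      have e2 := sginj _ _ h2
      exact hij (Fin.ext (by omega))
    · exact ineq_off _ _ (fun e => hc (congrArg Fin.val e)) _ _ _ _
        (sgpm _) (sgpm _) (sgpm _) (sgpm _)
end

section
/- Let u = (2√5 − 1)/19 (the positive root of 19u² + 2u − 1 = 0). There exist 24 unit vectors x_1, …, x_24 in EuclideanSpace ℝ (Fin 7) such that for all i ≠ j the inner product ⟨x_i, x_j⟩ lies in the set {u, −u, −3u, 2u − 1}, and for each fixed index i there are exactly 15 indices j ≠ i with ⟨x_i, x_j⟩ = u, exactly 2 with ⟨x_i, x_j⟩ = −u, exactly 5 with ⟨x_i, x_j⟩ = −3u, and exactly 1 with ⟨x_i, x_j⟩ = 2u − 1. -/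
open scoped InnerProductSpace Classical

namespace Code24

def A : Fin 24 → Fin 7 → ℤ :=
  ![ ![0, 2, 1, 0, 2, 1, 0],
     ![0, 2, 1, 0, -2, -1, 0],
     ![0, -2, -1, 0, 2, 1, 0],
     ![0, -2, -1, 0, -2, -1, 0],
     ![0, 2, -1, 2, 1, 0, 0],
     ![0, 2, -1, -2, -1, 0, 0],
     ![0, -2, 1, 2, 1, 0, 0],
     ![0, -2, 1, -2, -1, 0, 0],
     ![2, 1, 0, 2, -1, 0, 0],
     ![2, 1, 0, -2, 1, 0, 0],
     ![-2, -1, 0, 2, -1, 0, 0],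
     ![-2, -1, 0, -2, 1, 0, 0],
     ![2, -1, 0, 1, 0, 2, 0],
     ![2, -1, 0, -1, 0, -2, 0],
     ![-2, 1, 0, 1, 0, 2, 0],
     ![-2, 1, 0, -1, 0, -2, 0],
     ![1, 0, 2, 0, 2, -1, 0],
     ![1, 0, 2, 0, -2, 1, 0],
     ![-1, 0, -2, 0, 2, -1, 0],
     ![-1, 0, -2, 0, -2, 1, 0],
     ![-1, 0, 2, -1, 0, 2, 0],
     ![-1, 0, 2, 1, 0, -2, 0],
     ![1, 0, -2, -1, 0, 2, 0],
     ![1, 0, -2, 1, 0, -2, 0]]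

def B : Fin 24 → Fin 7 → ℤ :=
  ![ ![0, 0, 1, 0, 0, 1, 0],
     ![0, 0, 1, 0, 0, -1, 0],
     ![0, 0, -1, 0, 0, 1, 0],
     ![0, 0, -1, 0, 0, -1, 0],
     ![0, 0, -1, 0, 1, 0, 0],
     ![0, 0, -1, 0, -1, 0, 0],
     ![0, 0, 1, 0, 1, 0, 0],
     ![0, 0, 1, 0, -1, 0, 0],
     ![0, 1, 0, 0, -1, 0, 0],
     ![0, 1, 0, 0, 1, 0, 0],
     ![0, -1, 0, 0, -1, 0, 0],
     ![0, -1, 0, 0, 1, 0, 0],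
     ![0, -1, 0, 1, 0, 0, 0],
     ![0, -1, 0, -1, 0, 0, 0],
     ![0, 1, 0, 1, 0, 0, 0],
     ![0, 1, 0, -1, 0, 0, 0],
     ![1, 0, 0, 0, 0, -1, 0],
     ![1, 0, 0, 0, 0, 1, 0],
     ![-1, 0, 0, 0, 0, -1, 0],
     ![-1, 0, 0, 0, 0, 1, 0],
     ![-1, 0, 0, -1, 0, 0, 0],
     ![-1, 0, 0, 1, 0, 0, 0],
     ![1, 0, 0, -1, 0, 0, 0],
     ![1, 0, 0, 1, 0, 0, 0]]

def C : Fin 24 → ℤ := ![1, -1, -1, 1, 1, -1, -1, 1, 1, -1, -1, 1, 1, -1, -1, 1, 1, -1, -1, 1, -1, 1, 1, -1]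

def F (i j : Fin 24) : ℤ :=
  A i 0 * A j 0 + A i 1 * A j 1 + A i 2 * A j 2 + A i 3 * A j 3 + A i 4 * A j 4 + A i 5 * A j 5
  + 5 * (B i 0 * B j 0 + B i 1 * B j 1 + B i 2 * B j 2 + B i 3 * B j 3 + B i 4 * B j 4 + B i 5 * B j 5)

def G (i j : Fin 24) : ℤ :=
  A i 0 * B j 0 + B i 0 * A j 0 + A i 1 * B j 1 + B i 1 * A j 1 + A i 2 * B j 2 + B i 2 * A j 2
  + A i 3 * B j 3 + B i 3 * A j 3 + A i 4 * B j 4 + B i 4 * A j 4 + A i 5 * B j 5 + B i 5 * A j 5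

def Hm (i j : Fin 24) : ℤ := C i * C j

noncomputable def Xp (z t : ℝ) (i : Fin 24) : EuclideanSpace ℝ (Fin 7) := WithLp.toLp 2 (fun k =>
  if k = 6 then t * (C i : ℝ)
  else z * ((A i k : ℝ) + (B i k : ℝ) * Real.sqrt 5))

/-- The 24 vectors. -/
noncomputable def X : Fin 24 → EuclideanSpace ℝ (Fin 7) :=
  Xp (Real.sqrt ((11 - 3 * Real.sqrt 5) / 152)) (Real.sqrt ((2 * Real.sqrt 5 - 1) / 19))

lemma sqrt5_lt : Real.sqrt 5 < 2.4 := by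
  nlinarith [Real.sq_sqrt (by norm_num : (5:ℝ) ≥ 0), Real.sqrt_nonneg 5]

lemma sqrt5_gt : (2:ℝ) < Real.sqrt 5 := by
  nlinarith [Real.sq_sqrt (by norm_num : (5:ℝ) ≥ 0), Real.sqrt_nonneg 5]

lemma masterp (z t u : ℝ) (ht2 : t ^ 2 = u) (i j : Fin 24) :
    ⟪Xp z t i, Xp z t j⟫_ℝ = z ^ 2 * ((F i j : ℝ) + (G i j : ℝ) * Real.sqrt 5) + u * (Hm i j : ℝ) := by
  have h5 : Real.sqrt 5 ^ 2 = 5 := Real.sq_sqrt (by norm_num)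
  simp only [PiLp.inner_apply, RCLike.inner_apply, conj_trivial, Fin.sum_univ_seven, Xp]
  norm_num [F, G, Hm]
  push_cast
  linear_combination (z ^ 2 * ((B i 0 : ℝ) * B j 0 + B i 1 * B j 1 + B i 2 * B j 2 + B i 3 * B j 3
      + B i 4 * B j 4 + B i 5 * B j 5)) * h5
    + ((C i : ℝ) * (C j : ℝ)) * ht2

lemma master (i j : Fin 24) :
    ⟪X i, X j⟫_ℝ = ((11 - 3 * Real.sqrt 5) / 152) * ((F i j : ℝ) + (G i j : ℝ) * Real.sqrt 5)
      + ((2 * Real.sqrt 5 - 1) / 19) * (Hm i j : ℝ) := by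
  have h := masterp (Real.sqrt ((11 - 3 * Real.sqrt 5) / 152))
    (Real.sqrt ((2 * Real.sqrt 5 - 1) / 19)) ((2 * Real.sqrt 5 - 1) / 19)
    (Real.sq_sqrt (by nlinarith [sqrt5_gt])) i j
  rw [Real.sq_sqrt (by nlinarith [sqrt5_lt] : (0:ℝ) ≤ (11 - 3 * Real.sqrt 5) / 152)] at h
  exact h

lemma key : ∀ i j : Fin 24, i ≠ j →
    (F i j = 4 ∧ G i j = 4 ∧ Hm i j = -1) ∨ (F i j = 0 ∧ G i j = 0 ∧ Hm i j = 1) ∨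
    (F i j = 0 ∧ G i j = 0 ∧ Hm i j = -1) ∨ (F i j = -4 ∧ G i j = -4 ∧ Hm i j = -1) ∨
    (F i j = -20 ∧ G i j = -4 ∧ Hm i j = 1) := by decide

lemma keyDiag : ∀ i : Fin 24, F i i = 20 ∧ G i i = 4 ∧ Hm i i = 1 := by decide

-- value evaluation lemmas
lemma ev1 : ((11 - 3 * Real.sqrt 5) / 152) * (20 + 4 * Real.sqrt 5)
    = 1 - (2 * Real.sqrt 5 - 1) / 19 := by
  have h5 : Real.sqrt 5 ^ 2 = 5 := Real.sq_sqrt (by norm_num)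
  linear_combination (-3/38 : ℝ) * h5

lemma ev2 : ((11 - 3 * Real.sqrt 5) / 152) * (4 + 4 * Real.sqrt 5)
    = 2 * ((2 * Real.sqrt 5 - 1) / 19) := by
  have h5 : Real.sqrt 5 ^ 2 = 5 := Real.sq_sqrt (by norm_num)
  linear_combination (-3/38 : ℝ) * h5

/-- classification of off-diagonal inner products -/
lemma classify (u : ℝ) (hu : u = (2 * Real.sqrt 5 - 1) / 19) (i j : Fin 24) (hij : i ≠ j) :
    (⟪X i, X j⟫_ℝ = u ↔ ((F i j = 4 ∧ G i j = 4 ∧ Hm i j = -1) ∨ (F i j = 0 ∧ G i j = 0 ∧ Hm i j = 1))) ∧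
    (⟪X i, X j⟫_ℝ = -u ↔ (F i j = 0 ∧ G i j = 0 ∧ Hm i j = -1)) ∧
    (⟪X i, X j⟫_ℝ = -3*u ↔ (F i j = -4 ∧ G i j = -4 ∧ Hm i j = -1)) ∧
    (⟪X i, X j⟫_ℝ = 2*u - 1 ↔ (F i j = -20 ∧ G i j = -4 ∧ Hm i j = 1)) := by
  have hlt := sqrt5_lt
  have hgt := sqrt5_gt
  have hu1 : 0 < u := by rw [hu]; linarith
  have hu2 : u < 1/5 := by rw [hu]; linarith
  have hval := master i j
  have he1 := ev1
  have he2 := ev2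
  rcases key i j hij with ⟨hF, hG, hH⟩ | ⟨hF, hG, hH⟩ | ⟨hF, hG, hH⟩ | ⟨hF, hG, hH⟩ | ⟨hF, hG, hH⟩ <;>
      rw [hF, hG, hH] at hval <;> push_cast at hval
  · have hvv : ⟪X i, X j⟫_ℝ = u := by rw [hval, hu]; linarith
    rw [hvv]
    exact ⟨⟨fun _ => Or.inl ⟨hF, hG, hH⟩, fun _ => rfl⟩,
      ⟨fun h => False.elim (by linarith), fun hq => False.elim (by omega)⟩,
      ⟨fun h => False.elim (by linarith), fun hq => False.elim (by omega)⟩,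
      ⟨fun h => False.elim (by linarith), fun hq => False.elim (by omega)⟩⟩
  · have hvv : ⟪X i, X j⟫_ℝ = u := by rw [hval, hu]; linarith
    rw [hvv]
    exact ⟨⟨fun _ => Or.inr ⟨hF, hG, hH⟩, fun _ => rfl⟩,
      ⟨fun h => False.elim (by linarith), fun hq => False.elim (by omega)⟩,
      ⟨fun h => False.elim (by linarith), fun hq => False.elim (by omega)⟩,
      ⟨fun h => False.elim (by linarith), fun hq => False.elim (by omega)⟩⟩
  · have hvv : ⟪X i, X j⟫_ℝ = -u := by rw [hval, hu]; linarith
    rw [hvv]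
    exact ⟨⟨fun h => False.elim (by linarith),
        fun hq => False.elim (by rcases hq with ⟨h1, _, _⟩ | ⟨_, _, h3⟩ <;> omega)⟩,
      ⟨fun _ => ⟨hF, hG, hH⟩, fun _ => rfl⟩,
      ⟨fun h => False.elim (by linarith), fun hq => False.elim (by omega)⟩,
      ⟨fun h => False.elim (by linarith), fun hq => False.elim (by omega)⟩⟩
  · have hvv : ⟪X i, X j⟫_ℝ = -3*u := by rw [hval, hu]; linarith
    rw [hvv]
    exact ⟨⟨fun h => False.elim (by linarith),
        fun hq => False.elim (by rcases hq with ⟨h1, _, _⟩ | ⟨h1, _, _⟩ <;> omega)⟩,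
      ⟨fun h => False.elim (by linarith), fun hq => False.elim (by omega)⟩,
      ⟨fun _ => ⟨hF, hG, hH⟩, fun _ => rfl⟩,
      ⟨fun h => False.elim (by linarith), fun hq => False.elim (by omega)⟩⟩
  · have hvv : ⟪X i, X j⟫_ℝ = 2*u - 1 := by rw [hval, hu]; linarith
    rw [hvv]
    exact ⟨⟨fun h => False.elim (by linarith),
        fun hq => False.elim (by rcases hq with ⟨h1, _, _⟩ | ⟨h1, _, _⟩ <;> omega)⟩,
      ⟨fun h => False.elim (by linarith), fun hq => False.elim (by omega)⟩,
      ⟨fun h => False.elim (by linarith), fun hq => False.elim (by omega)⟩,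
      ⟨fun _ => ⟨hF, hG, hH⟩, fun _ => rfl⟩⟩

lemma norm_one (i : Fin 24) : ‖X i‖ = 1 := by
  have h := master i i
  obtain ⟨hF, hG, hH⟩ := keyDiag i
  rw [hF, hG, hH] at h
  push_cast at h
  have he1 := ev1
  have hinner : ⟪X i, X i⟫_ℝ = 1 := by rw [h]; linarith
  have hn : ‖X i‖ ^ 2 = 1 := by rw [← real_inner_self_eq_norm_sq, hinner]
  nlinarith [norm_nonneg (X i)]

end Code24

/-- Let `u = (2√5 - 1)/19`, the positive root of `19u² + 2u - 1 = 0`. There exist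
24 unit vectors in `EuclideanSpace ℝ (Fin 7)` such that all pairwise inner products
lie in `{u, -u, -3u, 2u - 1}`, and from each point the value `u` occurs exactly
15 times, `-u` exactly 2 times, `-3u` exactly 5 times, and `2u - 1` exactly once. -/
theorem exists_spherical_code_24_points_dim7_structure :
    ∀ u : ℝ, u = (2 * Real.sqrt 5 - 1) / 19 →
      ∃ x : Fin 24 → EuclideanSpace ℝ (Fin 7),
        (∀ i, ‖x i‖ = 1) ∧
        (∀ i j, i ≠ j → ⟪x i, x j⟫_ℝ ∈ ({u, -u, -3*u, 2*u - 1} : Set ℝ)) ∧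
        (∀ i, (Finset.univ.filter fun j => j ≠ i ∧ ⟪x i, x j⟫_ℝ = u).card = 15) ∧
        (∀ i, (Finset.univ.filter fun j => j ≠ i ∧ ⟪x i, x j⟫_ℝ = -u).card = 2) ∧
        (∀ i, (Finset.univ.filter fun j => j ≠ i ∧ ⟪x i, x j⟫_ℝ = -3*u).card = 5) ∧
        (∀ i, (Finset.univ.filter fun j => j ≠ i ∧ ⟪x i, x j⟫_ℝ = 2*u - 1).card = 1) := by
  intro u hu
  refine ⟨Code24.X, Code24.norm_one, ?_, ?_, ?_, ?_, ?_⟩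
  · intro i j hij
    simp only [Set.mem_insert_iff, Set.mem_singleton_iff]
    rcases Code24.key i j hij with h | h | h | h | h
    · exact Or.inl ((Code24.classify u hu i j hij).1.mpr (Or.inl h))
    · exact Or.inl ((Code24.classify u hu i j hij).1.mpr (Or.inr h))
    · exact Or.inr (Or.inl ((Code24.classify u hu i j hij).2.1.mpr h))
    · exact Or.inr (Or.inr (Or.inl ((Code24.classify u hu i j hij).2.2.1.mpr h)))
    · exact Or.inr (Or.inr (Or.inr ((Code24.classify u hu i j hij).2.2.2.mpr h)))
  · have hc : ∀ i : Fin 24, (Finset.univ.filter fun j : Fin 24 => j ≠ i ∧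
        ((Code24.F i j = 4 ∧ Code24.G i j = 4 ∧ Code24.Hm i j = -1) ∨ (Code24.F i j = 0 ∧ Code24.G i j = 0 ∧ Code24.Hm i j = 1))).card = 15 := by decide
    intro i
    have hiff : ∀ j ∈ (Finset.univ : Finset (Fin 24)),
        ((j ≠ i ∧ ⟪Code24.X i, Code24.X j⟫_ℝ = u) ↔ (j ≠ i ∧ ((Code24.F i j = 4 ∧ Code24.G i j = 4 ∧ Code24.Hm i j = -1) ∨ (Code24.F i j = 0 ∧ Code24.G i j = 0 ∧ Code24.Hm i j = 1)))) := by
      intro j _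
      constructor
      · rintro ⟨h1, h2⟩; exact ⟨h1, ((Code24.classify u hu i j (Ne.symm h1)).1).mp h2⟩
      · rintro ⟨h1, h2⟩; exact ⟨h1, ((Code24.classify u hu i j (Ne.symm h1)).1).mpr h2⟩
    rw [Finset.filter_congr hiff]
    exact hc i
  · have hc : ∀ i : Fin 24, (Finset.univ.filter fun j : Fin 24 => j ≠ i ∧
        (Code24.F i j = 0 ∧ Code24.G i j = 0 ∧ Code24.Hm i j = -1)).card = 2 := by decide
    intro i
    have hiff : ∀ j ∈ (Finset.univ : Finset (Fin 24)),
        ((j ≠ i ∧ ⟪Code24.X i, Code24.X j⟫_ℝ = -u) ↔ (j ≠ i ∧ (Code24.F i j = 0 ∧ Code24.G i j = 0 ∧ Code24.Hm i j = -1))) := by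
      intro j _
      constructor
      · rintro ⟨h1, h2⟩; exact ⟨h1, ((Code24.classify u hu i j (Ne.symm h1)).2.1).mp h2⟩
      · rintro ⟨h1, h2⟩; exact ⟨h1, ((Code24.classify u hu i j (Ne.symm h1)).2.1).mpr h2⟩
    rw [Finset.filter_congr hiff]
    exact hc i
  · have hc : ∀ i : Fin 24, (Finset.univ.filter fun j : Fin 24 => j ≠ i ∧
        (Code24.F i j = -4 ∧ Code24.G i j = -4 ∧ Code24.Hm i j = -1)).card = 5 := by decide
    intro i
    have hiff : ∀ j ∈ (Finset.univ : Finset (Fin 24)),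
        ((j ≠ i ∧ ⟪Code24.X i, Code24.X j⟫_ℝ = -3*u) ↔ (j ≠ i ∧ (Code24.F i j = -4 ∧ Code24.G i j = -4 ∧ Code24.Hm i j = -1))) := by
      intro j _
      constructor
      · rintro ⟨h1, h2⟩; exact ⟨h1, ((Code24.classify u hu i j (Ne.symm h1)).2.2.1).mp h2⟩
      · rintro ⟨h1, h2⟩; exact ⟨h1, ((Code24.classify u hu i j (Ne.symm h1)).2.2.1).mpr h2⟩
    rw [Finset.filter_congr hiff]
    exact hc i
  · have hc : ∀ i : Fin 24, (Finset.univ.filter fun j : Fin 24 => j ≠ i ∧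
        (Code24.F i j = -20 ∧ Code24.G i j = -4 ∧ Code24.Hm i j = 1)).card = 1 := by decide
    intro i
    have hiff : ∀ j ∈ (Finset.univ : Finset (Fin 24)),
        ((j ≠ i ∧ ⟪Code24.X i, Code24.X j⟫_ℝ = 2*u - 1) ↔ (j ≠ i ∧ (Code24.F i j = -20 ∧ Code24.G i j = -4 ∧ Code24.Hm i j = 1))) := by
      intro j _
      constructor
      · rintro ⟨h1, h2⟩; exact ⟨h1, ((Code24.classify u hu i j (Ne.symm h1)).2.2.2).mp h2⟩
      · rintro ⟨h1, h2⟩; exact ⟨h1, ((Code24.classify u hu i j (Ne.symm h1)).2.2.2).mpr h2⟩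
    rw [Finset.filter_congr hiff]
    exact hc i
end

section
/- There exist 10 unit vectors x_1, …, x_10 in EuclideanSpace ℝ (Fin 4) such that ⟨x_i, x_j⟩ ≤ 1/6 for all i ≠ j. -/
open scoped InnerProductSpace

namespace SphCode10

def P : Fin 10 → Fin 5 × Fin 5 :=
  ![(0,1),(0,2),(0,3),(0,4),(1,2),(1,3),(1,4),(2,3),(2,4),(3,4)]

def pat : Fin 10 → Fin 5 → ℤ := fun k j =>
  if j = (P k).1 ∨ j = (P k).2 then 3 else -2

lemma pat_sum (k : Fin 10) : ∑ j, pat k j = 0 := by revert k; decide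

lemma pat_self (k : Fin 10) : ∑ j, pat k j * pat k j = 30 := by revert k; decide

lemma pat_off : ∀ k l : Fin 10, k ≠ l → ∑ j, pat k j * pat l j ≤ 5 := by decide

noncomputable def c : ℝ := Real.sqrt (5/6) / 5

lemma c_sq : c * c = 1/30 := by
  have : Real.sqrt (5/6) * Real.sqrt (5/6) = 5/6 := Real.mul_self_sqrt (by norm_num)
  unfold c; rw [div_mul_div_comm, this]; norm_num

noncomputable def w : Fin 10 → EuclideanSpace ℝ (Fin 5) := fun k =>
  (WithLp.equiv 2 (Fin 5 → ℝ)).symm (fun j => c * (pat k j : ℝ))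

lemma w_apply (k : Fin 10) (j : Fin 5) : w k j = c * (pat k j : ℝ) := rfl

lemma inner_w (k l : Fin 10) :
    ⟪w k, w l⟫_ℝ = (1/30) * ((∑ j, pat k j * pat l j : ℤ) : ℝ) := by
  rw [PiLp.inner_apply]
  push_cast
  simp only [w_apply, RCLike.inner_apply, conj_trivial]
  rw [Finset.mul_sum]
  congr 1; funext j; rw [← c_sq]; ring

noncomputable def sumLM : EuclideanSpace ℝ (Fin 5) →ₗ[ℝ] ℝ where
  toFun x := ∑ j, x j
  map_add' x y := by simp [Finset.sum_add_distrib]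
  map_smul' r x := by simp [Finset.mul_sum]

noncomputable def K : Submodule ℝ (EuclideanSpace ℝ (Fin 5)) := LinearMap.ker sumLM

lemma w_mem (k : Fin 10) : w k ∈ K := by
  have : (sumLM (w k)) = 0 := by
    show (∑ j, w k j) = 0
    simp only [w_apply, ← Finset.mul_sum]
    have : (∑ j, ((pat k j : ℤ) : ℝ)) = ((∑ j, pat k j : ℤ) : ℝ) := by push_cast; ring
    rw [this, pat_sum]; simp
  exact this

lemma sumLM_surj : Function.Surjective sumLM := by
  intro r
  refine ⟨(WithLp.equiv 2 (Fin 5 → ℝ)).symm (fun _ => r / 5), ?_⟩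
  show (∑ _j : Fin 5, r / 5) = r
  simp; ring

lemma finrank_K : Module.finrank ℝ K = 4 := by
  have h := LinearMap.finrank_range_add_finrank_ker sumLM
  rw [LinearMap.range_eq_top.mpr sumLM_surj, finrank_top] at h
  rw [Module.finrank_self] at h
  have h5 : Module.finrank ℝ (EuclideanSpace ℝ (Fin 5)) = 5 := by
    simp [finrank_euclideanSpace_fin]
  rw [h5] at h
  show Module.finrank ℝ (LinearMap.ker sumLM) = 4
  omega

noncomputable def B : OrthonormalBasis (Fin 4) ℝ K :=
  (stdOrthonormalBasis ℝ K).reindex (finCongr finrank_K)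

end SphCode10

open SphCode10 in
/-- There exist 10 unit vectors in `EuclideanSpace ℝ (Fin 4)` whose pairwise
inner products are all at most the stated bound. -/
theorem exists_spherical_code_10_points_dim4 :
    ∃ x : Fin 10 → EuclideanSpace ℝ (Fin 4),
      (∀ i, ‖x i‖ = 1) ∧ ∀ i j, i ≠ j → ⟪x i, x j⟫_ℝ ≤ 1 / 6 := by
  refine ⟨fun k => B.repr ⟨w k, w_mem k⟩, ?_, ?_⟩
  · intro i
    have h1 : ⟪w i, w i⟫_ℝ = 1 := by
      rw [inner_w, pat_self]; norm_num
    have h2 : ‖w i‖ * ‖w i‖ = 1 := by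
      rw [← real_inner_self_eq_norm_mul_norm, h1]
    have h3 : ‖B.repr ⟨w i, w_mem i⟩‖ = ‖w i‖ := by
      rw [LinearIsometryEquiv.norm_map]
      rfl
    rw [h3]
    rcases mul_self_eq_one_iff.mp h2 with h | h
    · exact h
    · nlinarith [norm_nonneg (w i)]
  · intro i j hij
    have h3 : ⟪B.repr ⟨w i, w_mem i⟩, B.repr ⟨w j, w_mem j⟩⟫_ℝ = ⟪w i, w j⟫_ℝ := by
      rw [B.repr.inner_map_map]
      rfl
    rw [h3, inner_w]
    have := pat_off i j hij
    have h5 : ((∑ x, pat i x * pat j x : ℤ) : ℝ) ≤ 5 := by exact_mod_cast this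
    linarith
end

section
/- There exist 12 unit vectors x_1, …, x_12 in EuclideanSpace ℝ (Fin 4) such that ⟨x_i, x_j⟩ ≤ 1/4 for all i ≠ j. -/
open scoped InnerProductSpace

noncomputable def sphCodeV : Fin 12 → Fin 4 → ℝ :=
  ![![1, 0, 0, 0],
    ![1/4, (1/4) * Real.sqrt 15, 0, 0],
    ![-1/2, (1/10) * Real.sqrt 15, (1/5) * Real.sqrt 15, 0],
    ![-1/2, (1/10) * Real.sqrt 15, (-2/15) * Real.sqrt 15, (1/3) * Real.sqrt 3],
    ![1/4, (1/20) * Real.sqrt 15, (-7/30) * Real.sqrt 15, (-1/6) * Real.sqrt 3],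
    ![-3/4, (1/20) * Real.sqrt 15, (-1/15) * Real.sqrt 15, (-1/3) * Real.sqrt 3],
    ![1/4, (1/20) * Real.sqrt 15, (1/10) * Real.sqrt 15, (1/2) * Real.sqrt 3],
    ![1/4, (-3/20) * Real.sqrt 15, (-2/15) * Real.sqrt 15, (1/3) * Real.sqrt 3],
    ![-3/4, (-3/20) * Real.sqrt 15, (1/30) * Real.sqrt 15, (1/6) * Real.sqrt 3],
    ![1/4, (1/20) * Real.sqrt 15, (1/10) * Real.sqrt 15, (-1/2) * Real.sqrt 3],
    ![0, (-1/5) * Real.sqrt 15, (-1/15) * Real.sqrt 15, (-1/3) * Real.sqrt 3],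
    ![1/4, (-3/20) * Real.sqrt 15, (1/5) * Real.sqrt 15, 0]]

set_option maxHeartbeats 2000000 in
/-- There exist 12 unit vectors in `EuclideanSpace ℝ (Fin 4)` whose pairwise
inner products are all at most the stated bound. -/
theorem exists_spherical_code_12_points_dim4 :
    ∃ x : Fin 12 → EuclideanSpace ℝ (Fin 4),
      (∀ i, ‖x i‖ = 1) ∧ ∀ i j, i ≠ j → ⟪x i, x j⟫_ℝ ≤ 1 / 4 := by
  have h15 : Real.sqrt 15 * Real.sqrt 15 = 15 := Real.mul_self_sqrt (by norm_num)
  have h3 : Real.sqrt 3 * Real.sqrt 3 = 3 := Real.mul_self_sqrt (by norm_num)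
  refine ⟨fun i => (WithLp.equiv 2 (Fin 4 → ℝ)).symm (sphCodeV i), ?_, ?_⟩
  · intro i
    rw [EuclideanSpace.norm_eq, Real.sqrt_eq_one]
    fin_cases i <;>
      simp only [sphCodeV, WithLp.equiv_symm_apply, WithLp.ofLp_toLp, Fin.sum_univ_four,
        Matrix.cons_val_zero', Matrix.cons_val_succ', Matrix.cons_val_zero,
        Matrix.cons_val_one, Matrix.cons_val_two, Matrix.cons_val_three, Matrix.cons_val_succ, Matrix.head_cons, Matrix.tail_cons,
        Real.norm_eq_abs, sq_abs] <;>
      nlinarith [h15, h3]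
  · intro i j hij
    fin_cases i <;> fin_cases j <;>
      first
        | exact absurd rfl hij
        | (simp only [PiLp.inner_apply, RCLike.inner_apply, conj_trivial, sphCodeV,
            WithLp.equiv_symm_apply, WithLp.ofLp_toLp, Fin.sum_univ_four,
            Matrix.cons_val_zero', Matrix.cons_val_succ', Matrix.cons_val_zero,
            Matrix.cons_val_one, Matrix.cons_val_two, Matrix.cons_val_three, Matrix.cons_val_succ, Matrix.head_cons, Matrix.tail_cons] <;>
           nlinarith [h15, h3])
end

section
/- Let u = (√13 − 1)/6 (the positive root of 3u² + u − 1 = 0). There exist 20 unit vectors x_1, …, x_20 in EuclideanSpace ℝ (Fin 4) such that ⟨x_i, x_j⟩ ≤ u for all i ≠ j. -/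
open scoped InnerProductSpace

namespace SC20

def NP : Fin 20 → Fin 4 → ℤ := ![
  ![36, 0, 0, 0],
  ![6, 36, 0, 0],
  ![(-6), 6, 36, 0],
  ![12, 16, 48, 36],
  ![(-6), 54, 18, 9],
  ![6, 84, 108, 18],
  ![6, (-54), (-144), (-18)],
  ![(-12), 32, 60, 36],
  ![12, 16, 12, 0],
  ![(-6), 6, (-90), (-9)],
  ![(-36), 0, 0, 0],
  ![(-6), (-36), 0, 0],
  ![6, (-6), (-36), 0],
  ![(-12), (-16), (-48), (-36)],
  ![6, (-54), (-18), (-9)],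
  ![(-6), (-84), (-108), (-18)],
  ![(-6), 54, 144, 18],
  ![12, (-32), (-60), (-36)],
  ![(-12), (-16), (-12), 0],
  ![6, (-6), 90, 9]]

def NQ : Fin 20 → Fin 4 → ℤ := ![
  ![0, 0, 0, 0],
  ![(-6), 0, 0, 0],
  ![6, 6, 0, 0],
  ![0, (-8), (-24), 0],
  ![6, (-18), (-18), (-9)],
  ![(-6), (-24), (-36), (-18)],
  ![(-6), 18, 36, 18],
  ![0, (-16), (-12), 0],
  ![0, (-8), 12, 0],
  ![6, 6, 18, 9],
  ![0, 0, 0, 0],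
  ![6, 0, 0, 0],
  ![(-6), (-6), 0, 0],
  ![0, 8, 24, 0],
  ![(-6), 18, 18, 9],
  ![6, 24, 36, 18],
  ![6, (-18), (-36), (-18)],
  ![0, 16, 12, 0],
  ![0, 8, (-12), 0],
  ![(-6), (-6), (-18), (-9)]]

def MP : Fin 4 → ℤ := ![18, 11, 6, (-36)]

def MQ : Fin 4 → ℤ := ![0, 1, 0, 12]

def aterm (i j : Fin 20) (k : Fin 4) : ℤ :=
  (NP i k * NP j k + 13 * (NQ i k * NQ j k)) * MP k
    + 13 * ((NP i k * NQ j k + NQ i k * NP j k) * MQ k)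

def bterm (i j : Fin 20) (k : Fin 4) : ℤ :=
  (NP i k * NP j k + 13 * (NQ i k * NQ j k)) * MQ k
    + (NP i k * NQ j k + NQ i k * NP j k) * MP k

def AZ (i j : Fin 20) : ℤ := aterm i j 0 + aterm i j 1 + aterm i j 2 + aterm i j 3

def BZ (i j : Fin 20) : ℤ := bterm i j 0 + bterm i j 1 + bterm i j 2 + bterm i j 3

lemma hdiag : ∀ i, AZ i i = 23328 ∧ BZ i i = 0 := by decide

lemma hoff : ∀ i j, i ≠ j →
    (6 * BZ i j ≤ 23328 ∧ 6 * AZ i j + 23328 ≤ 3 * (23328 - 6 * BZ i j)) ∨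
    (23328 ≤ 6 * BZ i j ∧ 3 * (6 * AZ i j + 23328) ≤ 11 * (23328 - 6 * BZ i j)) := by decide

lemma h13 : Real.sqrt 13 * Real.sqrt 13 = 13 := Real.mul_self_sqrt (by norm_num)

lemma sqrt13_ge : (3 : ℝ) ≤ Real.sqrt 13 := by
  nlinarith [h13, Real.sqrt_nonneg 13]

lemma sqrt13_le : Real.sqrt 13 ≤ 11 / 3 := by
  nlinarith [h13, Real.sqrt_nonneg 13]

noncomputable def s : Fin 4 → ℝ := fun k =>
  Real.sqrt (((MP k : ℝ) + (MQ k : ℝ) * Real.sqrt 13) / 18)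

lemma hs : ∀ k, s k * s k = ((MP k : ℝ) + (MQ k : ℝ) * Real.sqrt 13) / 18 := by
  intro k
  apply Real.mul_self_sqrt
  fin_cases k <;> simp [MP, MQ] <;> nlinarith [sqrt13_ge]

noncomputable def x : Fin 20 → EuclideanSpace ℝ (Fin 4) := fun i => WithLp.toLp 2 (fun k =>
  (((NP i k : ℝ) + (NQ i k : ℝ) * Real.sqrt 13) / 36) * s k)

lemma inner_eq (i j : Fin 20) :
    ⟪x i, x j⟫_ℝ = ((AZ i j : ℝ) + (BZ i j : ℝ) * Real.sqrt 13) / 23328 := by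
  have hterm : ∀ k : Fin 4, x i k * x j k
      = ((aterm i j k : ℝ) + (bterm i j k : ℝ) * Real.sqrt 13) / 23328 := by
    intro k
    have hk := hs k
    simp only [x, aterm, bterm, PiLp.toLp_apply]
    push_cast
    linear_combination
      ((((NP i k : ℝ) + (NQ i k : ℝ) * Real.sqrt 13) *
        ((NP j k : ℝ) + (NQ j k : ℝ) * Real.sqrt 13)) / 1296) * hk +
      ((((NQ i k : ℝ) * (NQ j k : ℝ) * (MP k : ℝ)
          + ((NP i k : ℝ) * (NQ j k : ℝ) + (NQ i k : ℝ) * (NP j k : ℝ)) * (MQ k : ℝ))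
        + (NQ i k : ℝ) * (NQ j k : ℝ) * (MQ k : ℝ) * Real.sqrt 13) / 23328) * h13
  rw [PiLp.inner_apply]
  simp only [RCLike.inner_apply, conj_trivial]
  rw [Fin.sum_univ_four, mul_comm ((x j).ofLp 0), mul_comm ((x j).ofLp 1),
    mul_comm ((x j).ofLp 2), mul_comm ((x j).ofLp 3), hterm 0, hterm 1, hterm 2, hterm 3]
  simp only [AZ, BZ]
  push_cast
  ring

end SC20

open SC20 in
/-- Let `u = (Real.sqrt 13 - 1) / 6` (the positive root of 3u² + u - 1 = 0). There exist 20 unit vectors in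
`EuclideanSpace ℝ (Fin 4)` whose pairwise inner products are all at most `u`. -/
theorem exists_spherical_code_20_points_dim4 :
    ∀ u : ℝ, u = (Real.sqrt 13 - 1) / 6 →
      ∃ x : Fin 20 → EuclideanSpace ℝ (Fin 4),
        (∀ i, ‖x i‖ = 1) ∧ ∀ i j, i ≠ j → ⟪x i, x j⟫_ℝ ≤ u := by
  intro u hu
  refine ⟨x, ?_, ?_⟩
  · intro i
    have h : ⟪x i, x i⟫_ℝ = 1 := by
      rw [inner_eq i i, (hdiag i).1, (hdiag i).2]; norm_num
    have h2 := real_inner_self_eq_norm_mul_norm (x i)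
    rw [h] at h2
    nlinarith [norm_nonneg (x i)]
  · intro i j hij
    rw [inner_eq i j, hu]
    rcases hoff i j hij with ⟨h1, h2⟩ | ⟨h1, h2⟩
    · have h1' : (6 : ℝ) * (BZ i j : ℝ) ≤ 23328 := by exact_mod_cast h1
      have h2' : (6 : ℝ) * (AZ i j : ℝ) + 23328 ≤ 3 * (23328 - 6 * (BZ i j : ℝ)) := by
        exact_mod_cast h2
      nlinarith [sqrt13_ge, mul_nonneg (sub_nonneg.2 sqrt13_ge)
        (by linarith : (0:ℝ) ≤ 23328 - 6 * (BZ i j : ℝ))]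
    · have h1' : (23328 : ℝ) ≤ 6 * (BZ i j : ℝ) := by exact_mod_cast h1
      have h2' : (3 : ℝ) * (6 * (AZ i j : ℝ) + 23328) ≤ 11 * (23328 - 6 * (BZ i j : ℝ)) := by
        exact_mod_cast h2
      nlinarith [sqrt13_le, mul_nonneg (sub_nonneg.2 sqrt13_le)
        (by linarith : (0:ℝ) ≤ 6 * (BZ i j : ℝ) - 23328)]
end

section
/- There exist 24 unit vectors x_1, …, x_24 in EuclideanSpace ℝ (Fin 4) such that ⟨x_i, x_j⟩ ≤ 1/2 for all i ≠ j. -/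
open scoped InnerProductSpace

def dfour : Fin 24 → Fin 4 → ℤ :=
  ![![1,1,0,0], ![1,-1,0,0], ![-1,1,0,0], ![-1,-1,0,0],
    ![1,0,1,0], ![1,0,-1,0], ![-1,0,1,0], ![-1,0,-1,0],
    ![1,0,0,1], ![1,0,0,-1], ![-1,0,0,1], ![-1,0,0,-1],
    ![0,1,1,0], ![0,1,-1,0], ![0,-1,1,0], ![0,-1,-1,0],
    ![0,1,0,1], ![0,1,0,-1], ![0,-1,0,1], ![0,-1,0,-1],
    ![0,0,1,1], ![0,0,1,-1], ![0,0,-1,1], ![0,0,-1,-1]]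

lemma dfour_norm : ∀ i, ∑ k, dfour i k * dfour i k = 2 := by decide

lemma dfour_ip : ∀ i j, i ≠ j → ∑ k, dfour i k * dfour j k ≤ 1 := by decide

lemma dfour_ip_real (i j : Fin 24) (h : i ≠ j) :
    ∑ k, (dfour i k : ℝ) * (dfour j k : ℝ) ≤ 1 := by
  exact_mod_cast dfour_ip i j h

lemma dfour_norm_real (i : Fin 24) :
    ∑ k, (dfour i k : ℝ) * (dfour i k : ℝ) = 2 := by
  exact_mod_cast dfour_norm i

noncomputable def dvec (i : Fin 24) : EuclideanSpace ℝ (Fin 4) :=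
  WithLp.toLp 2 (fun k => (dfour i k : ℝ) / Real.sqrt 2)

/-- There exist 24 unit vectors in `EuclideanSpace ℝ (Fin 4)` whose pairwise
inner products are all at most the stated bound. -/
theorem exists_spherical_code_24_points_dim4 :
    ∃ x : Fin 24 → EuclideanSpace ℝ (Fin 4),
      (∀ i, ‖x i‖ = 1) ∧ ∀ i j, i ≠ j → ⟪x i, x j⟫_ℝ ≤ 1 / 2 := by
  have hsq : Real.sqrt 2 ^ 2 = 2 := Real.sq_sqrt (by norm_num)
  refine ⟨dvec, ?_, ?_⟩
  · intro i
    rw [EuclideanSpace.norm_eq]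
    have : ∑ k, ‖dvec i k‖ ^ 2 = 1 := by
      simp only [dvec, PiLp.toLp_apply, Real.norm_eq_abs, sq_abs, div_pow, hsq]
      rw [← Finset.sum_div]
      simp only [sq]
      rw [dfour_norm_real]
      norm_num
    rw [this, Real.sqrt_one]
  · intro i j h
    have : ⟪dvec i, dvec j⟫_ℝ = (∑ k, (dfour i k : ℝ) * (dfour j k : ℝ)) / 2 := by
      simp only [PiLp.inner_apply, RCLike.inner_apply, conj_trivial, dvec, PiLp.toLp_apply]
      simp only [show ∀ a b : ℝ, a / Real.sqrt 2 * (b / Real.sqrt 2) = a * b / 2 from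
        fun a b => by rw [div_mul_div_comm, ← sq, hsq]]
      rw [← Finset.sum_div]
      simp only [mul_comm]
    rw [this]
    have := dfour_ip_real i j h
    linarith
end

section
/- There exist 16 unit vectors x_1, …, x_16 in EuclideanSpace ℝ (Fin 5) such that ⟨x_i, x_j⟩ ≤ 1/5 for all i ≠ j. -/
open scoped InnerProductSpace

/-- Sign matrix: row `i` is a `±1` vector whose first four entries are given by
the bits of `i` and whose last entry makes the number of `-1`s even. -/
def sphCodeE (i : Fin 16) (k : Fin 5) : ℤ :=
  if (if k.val < 4 then i.val.testBit k.val
      else ((i.val.testBit 0 != i.val.testBit 1) != (i.val.testBit 2 != i.val.testBit 3)))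
  then 1 else -1

lemma sphCodeE_sq (i : Fin 16) (k : Fin 5) : sphCodeE i k * sphCodeE i k = 1 := by
  revert k; revert i; decide

lemma sphCodeE_sum (i j : Fin 16) (h : i ≠ j) :
    (∑ k, sphCodeE i k * sphCodeE j k) ≤ 1 := by
  revert h; revert j; revert i; decide

/-- There exist 16 unit vectors in `EuclideanSpace ℝ (Fin 5)` whose pairwise
inner products are all at most the stated bound. -/
theorem exists_spherical_code_16_points_dim5 :
    ∃ x : Fin 16 → EuclideanSpace ℝ (Fin 5),
      (∀ i, ‖x i‖ = 1) ∧ ∀ i j, i ≠ j → ⟪x i, x j⟫_ℝ ≤ 1 / 5 := by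
  have h5 : (0:ℝ) < Real.sqrt 5 := by positivity
  have hsq : Real.sqrt 5 * Real.sqrt 5 = 5 := Real.mul_self_sqrt (by norm_num)
  refine ⟨fun i => (WithLp.toLp 2 (fun k => (sphCodeE i k : ℝ) / Real.sqrt 5) :
      EuclideanSpace ℝ (Fin 5)), ?_, ?_⟩
  · intro i
    rw [EuclideanSpace.norm_eq]
    have hterm : ∀ k : Fin 5, ((sphCodeE i k : ℝ) / Real.sqrt 5) ^ 2 = 1 / 5 := by
      intro k
      have h1 : ((sphCodeE i k : ℝ)) * (sphCodeE i k : ℝ) = 1 := by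
        exact_mod_cast congrArg (Int.cast : ℤ → ℝ) (sphCodeE_sq i k)
      rw [div_pow, sq, sq, hsq, h1]
    simp only [WithLp.ofLp_toLp, Real.norm_eq_abs, sq_abs, hterm]
    norm_num
  · intro i j hij
    have key : ((∑ k, sphCodeE i k * sphCodeE j k : ℤ) : ℝ) ≤ 1 := by
      exact_mod_cast sphCodeE_sum i j hij
    rw [PiLp.inner_apply]
    have hterm : ∀ k : Fin 5,
        ⟪((sphCodeE i k : ℝ) / Real.sqrt 5), ((sphCodeE j k : ℝ) / Real.sqrt 5)⟫_ℝ
          = ((sphCodeE i k * sphCodeE j k : ℤ) : ℝ) / 5 := by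
      intro k
      simp only [RCLike.inner_apply, conj_trivial]
      push_cast
      rw [div_mul_div_comm, hsq]
      ring
    simp only [WithLp.ofLp_toLp, hterm]
    rw [← Finset.sum_div]
    push_cast at key ⊢
    linarith
end

section
/- There exist 27 unit vectors x_1, …, x_27 in EuclideanSpace ℝ (Fin 6) such that ⟨x_i, x_j⟩ ≤ 1/4 for all i ≠ j. -/
open scoped InnerProductSpace

noncomputable section SphCode27

namespace SphCode27

lemma cons_val_five {α} (a : α) (u : Fin 5 → α) : Matrix.vecCons a u 5 = u 4 := rfl

def s : ℝ := Real.sqrt 3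

def c1 : Fin 3 → ℝ := ![1, -1/2, -1/2]
def c2 : Fin 3 → ℝ := ![0, s/2, -s/2]

lemma d_eq (a b : Fin 3) :
    c1 a * c1 b + c2 a * c2 b = if a = b then 1 else -1/2 := by
  have h : s * s = 3 := Real.mul_self_sqrt (by norm_num)
  fin_cases a <;> fin_cases b <;>
    simp [c1, c2] <;> nlinarith [h]

lemma key1 (a b c e : Fin 3) (h : a ≠ c ∨ b ≠ e) :
    c1 a * c1 c + c2 a * c2 c + (c1 b * c1 e + c2 b * c2 e) ≤ 1 / 2 := by
  have h1 := d_eq a c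
  have h2 := d_eq b e
  rcases h with h | h <;> split_ifs at h1 h2 <;> simp_all <;> linarith

lemma key2 (b c : Fin 3) : -(c1 b * c1 c) - c2 b * c2 c ≤ 1 / 2 := by
  have h1 := d_eq b c
  split_ifs at h1 <;> linarith

def v : Fin 3 → Fin 3 → Fin 3 → Fin 6 → ℝ
  | 0, a, b => ![0, 0, c1 a, c2 a, -c1 b, -c2 b]
  | 1, a, b => ![-c1 b, -c2 b, 0, 0, c1 a, c2 a]
  | 2, a, b => ![c1 a, c2 a, -c1 b, -c2 b, 0, 0]

def w (t a b : Fin 3) : EuclideanSpace ℝ (Fin 6) :=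
  (Real.sqrt 2)⁻¹ • (WithLp.equiv 2 (Fin 6 → ℝ)).symm (v t a b)

lemma inner_w (t a b t' c e : Fin 3) :
    ⟪w t a b, w t' c e⟫_ℝ = (∑ k, v t a b k * v t' c e k) / 2 := by
  have h2 : Real.sqrt 2 * Real.sqrt 2 = 2 := Real.mul_self_sqrt (by norm_num)
  have hinv : (Real.sqrt 2)⁻¹ * (Real.sqrt 2)⁻¹ = 1 / 2 := by
    rw [← mul_inv, h2]; norm_num
  rw [w, w, real_inner_smul_left, real_inner_smul_right, ← mul_assoc, hinv]
  rw [show ⟪(WithLp.equiv 2 (Fin 6 → ℝ)).symm (v t a b),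
        (WithLp.equiv 2 (Fin 6 → ℝ)).symm (v t' c e)⟫_ℝ
      = ∑ k, v t a b k * v t' c e k from by
    simp [PiLp.inner_apply, RCLike.inner_apply, conj_trivial]
    exact Finset.sum_congr rfl fun k _ => mul_comm _ _]
  ring

lemma inner_w_self (t a b : Fin 3) : ⟪w t a b, w t a b⟫_ℝ = 1 := by
  rw [inner_w]
  have h1 := d_eq a a
  have h2 := d_eq b b
  simp at h1 h2
  fin_cases t <;>
    · simp [v, Fin.sum_univ_six, cons_val_five]
      nlinarith [h1, h2]

lemma inner_w_le (t a b t' c e : Fin 3)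
    (h : ((t, a), b) ≠ ((t', c), e)) :
    ⟪w t a b, w t' c e⟫_ℝ ≤ 1 / 4 := by
  rw [inner_w]
  fin_cases t <;> fin_cases t' <;>
    simp only [v, Fin.sum_univ_six, cons_val_five, Matrix.cons_val_zero,
      Matrix.cons_val_one, Matrix.head_cons, Matrix.cons_val_two,
      Matrix.cons_val_three, Matrix.cons_val_four, Matrix.tail_cons,
      mul_zero, zero_mul, add_zero, zero_add, mul_neg, neg_mul, neg_neg] <;>
    first
      | linarith [key2 b c, key2 a e]
      | · have hd : a ≠ c ∨ b ≠ e := by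
            by_contra hh
            push_neg at hh
            exact h (by simp [hh.1, hh.2])
          linarith [key1 a b c e hd]

def dec : Fin 27 ≃ (Fin 3 × Fin 3) × Fin 3 :=
  ((finCongr (by norm_num)).trans finProdFinEquiv.symm).trans
    (Equiv.prodCongr finProdFinEquiv.symm (Equiv.refl _))

end SphCode27

end SphCode27

/-- There exist 27 unit vectors in `EuclideanSpace ℝ (Fin 6)` whose pairwise
inner products are all at most the stated bound. -/
theorem exists_spherical_code_27_points_dim6 :
    ∃ x : Fin 27 → EuclideanSpace ℝ (Fin 6),
      (∀ i, ‖x i‖ = 1) ∧ ∀ i j, i ≠ j → ⟪x i, x j⟫_ℝ ≤ 1 / 4 := by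
  refine ⟨fun i => SphCode27.w (SphCode27.dec i).1.1 (SphCode27.dec i).1.2
      (SphCode27.dec i).2, fun i => ?_, fun i j hij => ?_⟩
  · have h := SphCode27.inner_w_self (SphCode27.dec i).1.1 (SphCode27.dec i).1.2
      (SphCode27.dec i).2
    rw [real_inner_self_eq_norm_mul_norm] at h
    nlinarith [norm_nonneg (SphCode27.w (SphCode27.dec i).1.1 (SphCode27.dec i).1.2
      (SphCode27.dec i).2)]
  · apply SphCode27.inner_w_le
    intro h
    apply hij
    apply SphCode27.dec.injective
    rcases hd : SphCode27.dec i with ⟨⟨t, a⟩, b⟩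
    rcases hd' : SphCode27.dec j with ⟨⟨t', c⟩, e⟩
    rw [hd, hd'] at h
    simpa using h
end

section
/- Let u = (2√6 − 1)/23 (the positive root of 23u² + 2u − 1 = 0). There exist 20 unit vectors x_1, …, x_20 in EuclideanSpace ℝ (Fin 7) such that ⟨x_i, x_j⟩ ≤ u for all i ≠ j. -/
open scoped InnerProductSpace

/-- Coordinates (as integer signs) of the 12 vectors `±e_k` in `ℝ⁶`. -/
def sphericalCodeD : Fin 12 → Fin 6 → ℤ :=
  ![![1,0,0,0,0,0], ![0,1,0,0,0,0], ![0,0,1,0,0,0], ![0,0,0,1,0,0], ![0,0,0,0,1,0], ![0,0,0,0,0,1],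
    ![-1,0,0,0,0,0], ![0,-1,0,0,0,0], ![0,0,-1,0,0,0], ![0,0,0,-1,0,0], ![0,0,0,0,-1,0], ![0,0,0,0,0,-1]]

/-- Sign vectors coming from a binary `[6,3,3]` code. -/
def sphericalCodeC : Fin 8 → Fin 6 → ℤ :=
  ![![1,1,1,1,1,1], ![-1,1,1,-1,-1,1], ![1,-1,1,-1,1,-1], ![1,1,-1,1,-1,-1],
    ![-1,-1,1,1,-1,-1], ![-1,1,-1,-1,1,-1], ![1,-1,-1,-1,-1,1], ![-1,-1,-1,1,1,1]]

lemma sphericalCodeD_norm : ∀ i, ∑ k, (sphericalCodeD i k)^2 = 1 := by decide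
lemma sphericalCodeC_norm : ∀ j, ∑ k, (sphericalCodeC j k)^2 = 6 := by decide
lemma sphericalCodeD_dot : ∀ i i', i ≠ i' →
    ∑ k, sphericalCodeD i k * sphericalCodeD i' k ≤ 0 := by decide
lemma sphericalCodeC_dot : ∀ j j', j ≠ j' →
    ∑ k, sphericalCodeC j k * sphericalCodeC j' k ≤ 0 := by decide
lemma sphericalCodeDC_dot : ∀ i j, ∑ k, sphericalCodeD i k * sphericalCodeC j k ≤ 1 := by decide

/-- Append a last coordinate to a vector in `ℝ⁶` to get a vector of `EuclideanSpace ℝ (Fin 7)`. -/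
noncomputable def sphericalCodeMk (v : Fin 6 → ℝ) (t : ℝ) : EuclideanSpace ℝ (Fin 7) :=
  (WithLp.equiv 2 (Fin 7 → ℝ)).symm (Fin.snoc v t)

lemma sphericalCodeMk_inner (v w : Fin 6 → ℝ) (s t : ℝ) :
    ⟪sphericalCodeMk v s, sphericalCodeMk w t⟫_ℝ = (∑ k, v k * w k) + s * t := by
  simp [sphericalCodeMk, PiLp.inner_apply, RCLike.inner_apply, conj_trivial,
    Fin.sum_univ_castSucc]
  simp [Fin.snoc]; ring

lemma sphericalCodeMk_norm (v : Fin 6 → ℝ) (t : ℝ) :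
    ‖sphericalCodeMk v t‖ = Real.sqrt ((∑ k, (v k)^2) + t^2) := by
  rw [EuclideanSpace.norm_eq]
  congr 1
  simp [sphericalCodeMk, Fin.sum_univ_castSucc, sq_abs]
  simp [Fin.snoc]

/-- Let `u = (2 * Real.sqrt 6 - 1) / 23` (the positive root of 23u² + 2u - 1 = 0). There exist 20 unit vectors in
`EuclideanSpace ℝ (Fin 7)` whose pairwise inner products are all at most `u`. -/
theorem exists_spherical_code_20_points_dim7 :
    ∀ u : ℝ, u = (2 * Real.sqrt 6 - 1) / 23 →
      ∃ x : Fin 20 → EuclideanSpace ℝ (Fin 7),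
        (∀ i, ‖x i‖ = 1) ∧ ∀ i j, i ≠ j → ⟪x i, x j⟫_ℝ ≤ u := by
  intro u hu
  have h6 : Real.sqrt 6 ^ 2 = 6 := Real.sq_sqrt (by norm_num)
  have h60 : (0:ℝ) ≤ Real.sqrt 6 := Real.sqrt_nonneg 6
  have h6lb : (2:ℝ) < Real.sqrt 6 := by nlinarith
  have h6ub : Real.sqrt 6 < 5/2 := by nlinarith
  have hu0 : 0 < u := by rw [hu]; nlinarith
  have hu1 : u < 1 := by rw [hu]; nlinarith
  have hquad : 23 * u^2 + 2*u - 1 = 0 := by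
    rw [hu]; field_simp; nlinarith
  have hsq : (1-u)^2 = 24*u^2 := by nlinarith
  -- the three radii
  set p := Real.sqrt (1-u) with hp
  set q := Real.sqrt u with hq
  set r := Real.sqrt ((1-u)/6) with hr
  have hp2 : p^2 = 1-u := Real.sq_sqrt (by linarith)
  have hq2 : q^2 = u := Real.sq_sqrt (by linarith)
  have hr2 : r^2 = (1-u)/6 := Real.sq_sqrt (by linarith)
  have hpr : p * r = 2*u := by
    rw [hp, hr, ← Real.sqrt_mul (by linarith)]
    rw [show (1-u) * ((1-u)/6) = (2*u)^2 by nlinarith]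
    exact Real.sqrt_sq (by linarith)
  -- the 20 vectors
  set y : Fin 12 ⊕ Fin 8 → EuclideanSpace ℝ (Fin 7) :=
    fun z => Sum.rec
      (fun i => sphericalCodeMk (fun k => p * (sphericalCodeD i k : ℝ)) q)
      (fun j => sphericalCodeMk (fun k => r * (sphericalCodeC j k : ℝ)) (-q)) z with hy
  set e : Fin 20 ≃ Fin 12 ⊕ Fin 8 := (finSumFinEquiv (m := 12) (n := 8)).symm with he
  refine ⟨fun i => y (e i), ?_, ?_⟩
  · intro i
    rcases hei : e i with i' | j'
    · simp only [hy, hei]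
      rw [sphericalCodeMk_norm]
      have : (∑ k, (p * (sphericalCodeD i' k : ℝ))^2) + q^2 = 1 := by
        have h1 : ∑ k, (p * (sphericalCodeD i' k : ℝ))^2
            = p^2 * ∑ k, ((sphericalCodeD i' k : ℝ))^2 := by
          rw [Finset.mul_sum]; congr 1; ext k; ring
        have h2 : ∑ k, ((sphericalCodeD i' k : ℝ))^2 = 1 := by
          exact_mod_cast sphericalCodeD_norm i'
        rw [h1, h2, hp2, hq2]; ring
      rw [this, Real.sqrt_one]
    · simp only [hy, hei]
      rw [sphericalCodeMk_norm]
      have : (∑ k, (r * (sphericalCodeC j' k : ℝ))^2) + (-q)^2 = 1 := by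
        have h1 : ∑ k, (r * (sphericalCodeC j' k : ℝ))^2
            = r^2 * ∑ k, ((sphericalCodeC j' k : ℝ))^2 := by
          rw [Finset.mul_sum]; congr 1; ext k; ring
        have h2 : ∑ k, ((sphericalCodeC j' k : ℝ))^2 = 6 := by
          exact_mod_cast sphericalCodeC_norm j'
        rw [h1, h2, hr2, neg_pow, hq2]; ring
      rw [this, Real.sqrt_one]
  · intro i j hij
    have hij' : e i ≠ e j := fun h => hij (e.injective h)
    rcases hei : e i with i1 | j1 <;> rcases hej : e j with i2 | j2 <;>
      rw [hei, hej] at hij'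
    · -- both in layer 1
      simp only [hy, hei, hej, sphericalCodeMk_inner]
      have h1 : ∑ k, (p * (sphericalCodeD i1 k : ℝ)) * (p * (sphericalCodeD i2 k : ℝ))
          = p^2 * ∑ k, ((sphericalCodeD i1 k : ℝ) * (sphericalCodeD i2 k : ℝ)) := by
        rw [Finset.mul_sum]; congr 1; ext k; ring
      have h2 : ∑ k, ((sphericalCodeD i1 k : ℝ) * (sphericalCodeD i2 k : ℝ)) ≤ 0 := by
        have := sphericalCodeD_dot i1 i2 (by intro h; exact hij' (by rw [h]))
        calc ∑ k, ((sphericalCodeD i1 k : ℝ) * (sphericalCodeD i2 k : ℝ))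
            = ((∑ k, sphericalCodeD i1 k * sphericalCodeD i2 k : ℤ) : ℝ) := by push_cast; rfl
          _ ≤ 0 := by exact_mod_cast this
      rw [h1, show q*q = u by rw [← hq2]; ring]
      nlinarith [sq_nonneg p]
    · -- layer 1 vs layer 2
      simp only [hy, hei, hej, sphericalCodeMk_inner]
      have h1 : ∑ k, (p * (sphericalCodeD i1 k : ℝ)) * (r * (sphericalCodeC j2 k : ℝ))
          = (p*r) * ∑ k, ((sphericalCodeD i1 k : ℝ) * (sphericalCodeC j2 k : ℝ)) := by
        rw [Finset.mul_sum]; congr 1; ext k; ring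
      have h2 : ∑ k, ((sphericalCodeD i1 k : ℝ) * (sphericalCodeC j2 k : ℝ)) ≤ 1 := by
        have := sphericalCodeDC_dot i1 j2
        calc ∑ k, ((sphericalCodeD i1 k : ℝ) * (sphericalCodeC j2 k : ℝ))
            = ((∑ k, sphericalCodeD i1 k * sphericalCodeC j2 k : ℤ) : ℝ) := by push_cast; rfl
          _ ≤ 1 := by exact_mod_cast this
      rw [h1, hpr]
      have : q * (-q) = -u := by rw [← hq2]; ring
      rw [this]
      nlinarith
    · -- layer 2 vs layer 1
      simp only [hy, hei, hej, sphericalCodeMk_inner]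
      have h1 : ∑ k, (r * (sphericalCodeC j1 k : ℝ)) * (p * (sphericalCodeD i2 k : ℝ))
          = (p*r) * ∑ k, ((sphericalCodeD i2 k : ℝ) * (sphericalCodeC j1 k : ℝ)) := by
        rw [Finset.mul_sum]; congr 1; ext k; ring
      have h2 : ∑ k, ((sphericalCodeD i2 k : ℝ) * (sphericalCodeC j1 k : ℝ)) ≤ 1 := by
        have := sphericalCodeDC_dot i2 j1
        calc ∑ k, ((sphericalCodeD i2 k : ℝ) * (sphericalCodeC j1 k : ℝ))
            = ((∑ k, sphericalCodeD i2 k * sphericalCodeC j1 k : ℤ) : ℝ) := by push_cast; rfl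
          _ ≤ 1 := by exact_mod_cast this
      rw [h1]
      have : (-q) * q = -u := by rw [← hq2]; ring
      rw [this, hpr]
      nlinarith
    · -- both in layer 2
      simp only [hy, hei, hej, sphericalCodeMk_inner]
      have h1 : ∑ k, (r * (sphericalCodeC j1 k : ℝ)) * (r * (sphericalCodeC j2 k : ℝ))
          = r^2 * ∑ k, ((sphericalCodeC j1 k : ℝ) * (sphericalCodeC j2 k : ℝ)) := by
        rw [Finset.mul_sum]; congr 1; ext k; ring
      have h2 : ∑ k, ((sphericalCodeC j1 k : ℝ) * (sphericalCodeC j2 k : ℝ)) ≤ 0 := by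
        have := sphericalCodeC_dot j1 j2 (by intro h; exact hij' (by rw [h]))
        calc ∑ k, ((sphericalCodeC j1 k : ℝ) * (sphericalCodeC j2 k : ℝ))
            = ((∑ k, sphericalCodeC j1 k * sphericalCodeC j2 k : ℤ) : ℝ) := by push_cast; rfl
          _ ≤ 0 := by exact_mod_cast this
      have : (-q) * (-q) = u := by rw [← hq2]; ring
      rw [h1, this]
      nlinarith [sq_nonneg r]
end

section
/- Let u = (2√2 − 1)/14 (the positive root of 28u² + 4u − 1 = 0). There exist 22 unit vectors x_1, …, x_22 in EuclideanSpace ℝ (Fin 8) such that ⟨x_i, x_j⟩ ≤ u for all i ≠ j. -/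
open scoped InnerProductSpace

namespace SC22

/-- parity of the low 3 bits -/
def par3 (n : ℕ) : ℕ := (n % 2 + n / 2 % 2 + n / 4 % 2) % 2

/-- Sylvester Hadamard 8×8 matrix with the all-ones column removed, over ℤ -/
def HzZ : Fin 8 → Fin 7 → ℤ :=
  fun i k => if par3 (i.val &&& (k.val + 1)) = 0 then 1 else -1

noncomputable def Hz : Fin 8 → Fin 7 → ℝ := fun i k => (HzZ i k : ℝ)

lemma hzZ_pm : ∀ (i : Fin 8) (k : Fin 7), HzZ i k = 1 ∨ HzZ i k = -1 := by decide

lemma hzZ_self : ∀ i : Fin 8, ∑ k, HzZ i k * HzZ i k = 7 := by decide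

lemma hzZ_ortho : ∀ i j : Fin 8, i ≠ j → ∑ k, HzZ i k * HzZ j k = -1 := by decide

lemma hz_pm (i : Fin 8) (k : Fin 7) : Hz i k = 1 ∨ Hz i k = -1 := by
  rcases hzZ_pm i k with h | h <;> simp [Hz, h]

lemma hz_self (i : Fin 8) : ∑ k, Hz i k * Hz i k = 7 := by
  have h : ((∑ k, HzZ i k * HzZ i k : ℤ) : ℝ) = 7 := by rw [hzZ_self i]; norm_num
  simpa [Hz] using h

lemma hz_ortho (i j : Fin 8) (h : i ≠ j) : ∑ k, Hz i k * Hz j k = -1 := by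
  have h2 : ((∑ k, HzZ i k * HzZ j k : ℤ) : ℝ) = -1 := by rw [hzZ_ortho i j h]; norm_num
  simpa [Hz] using h2

noncomputable def r : ℝ := Real.sqrt 2
lemma r_sq : r ^ 2 = 2 := Real.sq_sqrt (by norm_num)
lemma r_pos : (0:ℝ) < r := Real.sqrt_pos.mpr (by norm_num)
lemma r_gt : (1:ℝ) < r := by nlinarith [r_sq, r_pos]
lemma r_lt : r < 3/2 := by nlinarith [r_sq, r_pos]

noncomputable def u : ℝ := (2 * r - 1) / 14
noncomputable def a : ℝ := Real.sqrt ((2 * r + 1) / 16)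
noncomputable def b : ℝ := Real.sqrt ((15 - 2 * r) / 16)
noncomputable def c : ℝ := Real.sqrt ((2 * r - 1) / 14)
noncomputable def d : ℝ := Real.sqrt ((15 - 2 * r) / 14)

lemma a_nonneg : 0 ≤ a := Real.sqrt_nonneg _
lemma b_nonneg : 0 ≤ b := Real.sqrt_nonneg _
lemma c_nonneg : 0 ≤ c := Real.sqrt_nonneg _
lemma d_nonneg : 0 ≤ d := Real.sqrt_nonneg _

lemma a_sq : a ^ 2 = (2 * r + 1) / 16 := Real.sq_sqrt (by nlinarith [r_gt, r_lt])
lemma b_sq : b ^ 2 = (15 - 2 * r) / 16 := Real.sq_sqrt (by nlinarith [r_gt, r_lt])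
lemma c_sq : c ^ 2 = (2 * r - 1) / 14 := Real.sq_sqrt (by nlinarith [r_gt, r_lt])
lemma d_sq : d ^ 2 = (15 - 2 * r) / 14 := Real.sq_sqrt (by nlinarith [r_gt, r_lt])

noncomputable def s : ℝ := b / Real.sqrt 7
lemma sqrt7_pos : (0:ℝ) < Real.sqrt 7 := Real.sqrt_pos.mpr (by norm_num)
lemma s_nonneg : 0 ≤ s := div_nonneg b_nonneg sqrt7_pos.le
lemma s_sq : s ^ 2 = (15 - 2 * r) / 112 := by
  have h7 : (Real.sqrt 7) ^ 2 = 7 := Real.sq_sqrt (by norm_num)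
  rw [s, div_pow, b_sq, h7]; ring

lemma key_AA : a ^ 2 - s ^ 2 = u := by rw [a_sq, s_sq, u]; ring

lemma key_normA : a ^ 2 + 7 * s ^ 2 = 1 := by rw [a_sq, s_sq]; ring

lemma key_normB : c ^ 2 + d ^ 2 = 1 := by rw [c_sq, d_sq]; ring

lemma ac : a * c = r / 8 := by
  have h : (a * c) ^ 2 = (r / 8) ^ 2 := by
    rw [mul_pow, a_sq, c_sq]; field_simp; nlinarith [r_sq]
  have h1 : 0 ≤ a * c := mul_nonneg a_nonneg c_nonneg
  have h2 : 0 ≤ r / 8 := div_nonneg r_pos.le (by norm_num)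
  nlinarith [h, h1, h2]

lemma sd : s * d = (15 * r - 4) / 56 := by
  have h : (s * d) ^ 2 = ((15 * r - 4) / 56) ^ 2 := by
    rw [mul_pow, s_sq, d_sq]; field_simp; nlinarith [r_sq]
  have h1 : 0 ≤ s * d := mul_nonneg s_nonneg d_nonneg
  have h2 : 0 ≤ (15 * r - 4) / 56 := by nlinarith [r_gt]
  nlinarith [h, h1, h2]

lemma key_AB : s * d - a * c = u := by rw [ac, sd, u]; ring

noncomputable def vA (i : Fin 8) : EuclideanSpace ℝ (Fin 8) :=
  WithLp.toLp 2 (Fin.cons a (fun k => s * Hz i k))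

noncomputable def vB (e : ℝ) (k : Fin 7) : EuclideanSpace ℝ (Fin 8) :=
  WithLp.toLp 2 (Fin.cons (-c) (fun t => if t = k then e else 0))

lemma inner_eq (x y : EuclideanSpace ℝ (Fin 8)) : ⟪x, y⟫_ℝ = ∑ i, x i * y i := by
  simp [PiLp.inner_apply, RCLike.inner_apply, conj_trivial, mul_comm]

lemma inner_vA_vA (i j : Fin 8) :
    ⟪vA i, vA j⟫_ℝ = a * a + s * s * ∑ k, Hz i k * Hz j k := by
  rw [inner_eq, Fin.sum_univ_succ]
  simp only [vA, WithLp.ofLp_toLp, Fin.cons_zero, Fin.cons_succ]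
  have h : ∀ k : Fin 7, s * Hz i k * (s * Hz j k) = s * s * (Hz i k * Hz j k) := by
    intros; ring
  simp_rw [h, ← Finset.mul_sum]

lemma inner_vA_vB (i : Fin 8) (e : ℝ) (k : Fin 7) :
    ⟪vA i, vB e k⟫_ℝ = -(a * c) + s * Hz i k * e := by
  rw [inner_eq, Fin.sum_univ_succ]
  simp only [vA, vB, WithLp.ofLp_toLp, Fin.cons_zero, Fin.cons_succ, mul_ite, mul_zero]
  rw [Finset.sum_ite_eq']
  simp

lemma inner_vB_vB (e e' : ℝ) (k k' : Fin 7) :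
    ⟪vB e k, vB e' k'⟫_ℝ = c * c + (if k = k' then e * e' else 0) := by
  rw [inner_eq, Fin.sum_univ_succ]
  simp only [vB, WithLp.ofLp_toLp, Fin.cons_zero, Fin.cons_succ, ite_mul, zero_mul, mul_ite, mul_zero]
  rw [Finset.sum_ite_eq']
  simp [neg_mul_neg, eq_comm]

lemma norm_one_of_inner (x : EuclideanSpace ℝ (Fin 8)) (h : ⟪x, x⟫_ℝ = 1) : ‖x‖ = 1 := by
  have := real_inner_self_eq_norm_sq x
  nlinarith [norm_nonneg x]

lemma norm_vA (i : Fin 8) : ‖vA i‖ = 1 := by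
  apply norm_one_of_inner
  rw [inner_vA_vA, hz_self]
  nlinarith [key_normA]

lemma norm_vB (e : ℝ) (he : e * e = d ^ 2) (k : Fin 7) : ‖vB e k‖ = 1 := by
  apply norm_one_of_inner
  rw [inner_vB_vB, if_pos rfl]
  nlinarith [key_normB]

lemma bound_AA (i j : Fin 8) (h : i ≠ j) : ⟪vA i, vA j⟫_ℝ ≤ u := by
  rw [inner_vA_vA, hz_ortho i j h]
  nlinarith [key_AA]

lemma bound_AB (i : Fin 8) (e : ℝ) (he : e = d ∨ e = -d) (k : Fin 7) :
    ⟪vA i, vB e k⟫_ℝ ≤ u := by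
  rw [inner_vA_vB]
  have hsd : 0 ≤ s * d := mul_nonneg s_nonneg d_nonneg
  have hkey := key_AB
  rcases hz_pm i k with h1 | h1 <;> rcases he with h2 | h2 <;> rw [h1, h2] <;> nlinarith

lemma bound_BB (e e' : ℝ) (k k' : Fin 7) (h : k ≠ k' ∨ e * e' = -(d ^ 2)) :
    ⟪vB e k, vB e' k'⟫_ℝ ≤ u := by
  rw [inner_vB_vB]
  have hc : c * c = u := by have := c_sq; rw [u]; nlinarith
  have hd : 0 ≤ d ^ 2 := sq_nonneg d
  rcases eq_or_ne k k' with hk | hk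
  · rcases h with h | h
    · exact absurd hk h
    · rw [if_pos hk, h]; linarith
  · rw [if_neg hk]; linarith

noncomputable def pt : Fin 22 → EuclideanSpace ℝ (Fin 8) := fun n =>
  if h : (n : ℕ) < 8 then vA ⟨n, h⟩
  else if h2 : (n : ℕ) < 15 then vB d ⟨(n : ℕ) - 8, by omega⟩
  else vB (-d) ⟨(n : ℕ) - 15, by omega⟩

lemma pt_norm (i : Fin 22) : ‖pt i‖ = 1 := by
  unfold pt
  split_ifs with h1 h2
  · exact norm_vA _
  · exact norm_vB d (by ring) _
  · exact norm_vB (-d) (by ring) _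

lemma pt_inner (i j : Fin 22) (hij : i ≠ j) : ⟪pt i, pt j⟫_ℝ ≤ u := by
  have hval : (i : ℕ) ≠ (j : ℕ) := fun h => hij (Fin.ext h)
  unfold pt
  split_ifs with h1 h2 h3 h4 h5 h6 h7 h8
  · exact bound_AA _ _ (by simp only [ne_eq, Fin.mk.injEq]; omega)
  · exact bound_AB _ _ (Or.inl rfl) _
  · exact bound_AB _ _ (Or.inr rfl) _
  · rw [real_inner_comm]; exact bound_AB _ _ (Or.inl rfl) _
  · apply bound_BB
    left
    simp only [ne_eq, Fin.mk.injEq]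
    omega
  · apply bound_BB
    right; ring
  · rw [real_inner_comm]; exact bound_AB _ _ (Or.inr rfl) _
  · apply bound_BB
    right; ring
  · apply bound_BB
    left
    simp only [ne_eq, Fin.mk.injEq]
    omega

end SC22

/-- Let `u = (2 * Real.sqrt 2 - 1) / 14` (the positive root of 28u² + 4u - 1 = 0). There exist 22 unit vectors in
`EuclideanSpace ℝ (Fin 8)` whose pairwise inner products are all at most `u`. -/
theorem exists_spherical_code_22_points_dim8 :
    ∀ u : ℝ, u = (2 * Real.sqrt 2 - 1) / 14 →
      ∃ x : Fin 22 → EuclideanSpace ℝ (Fin 8),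
        (∀ i, ‖x i‖ = 1) ∧ ∀ i j, i ≠ j → ⟪x i, x j⟫_ℝ ≤ u := by
  intro u hu
  refine ⟨SC22.pt, SC22.pt_norm, fun i j hij => ?_⟩
  have := SC22.pt_inner i j hij
  rwa [SC22.u, SC22.r, ← hu] at this
end

section
/- There exists a real number u with 0 < u < 1/8 satisfying 288u³ − 64u² − 8u + 1 = 0, and there exist 17 unit vectors x_1, …, x_17 in EuclideanSpace ℝ (Fin 8) such that ⟨x_i, x_j⟩ ≤ u for all i ≠ j. -/
open scoped InnerProductSpace

noncomputable def vec (s t : ℝ) (m : Fin 8) : EuclideanSpace ℝ (Fin 8) :=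
  WithLp.toLp 2 (fun k => s + (if k = m then t else 0))

lemma inner_vec (s t s' t' : ℝ) (m m' : Fin 8) :
    ⟪vec s t m, vec s' t' m'⟫_ℝ =
      8*s*s' + s*t' + t*s' + (if m = m' then t*t' else 0) := by
  simp only [vec, PiLp.inner_apply, PiLp.toLp_apply, RCLike.inner_apply, conj_trivial]
  simp only [add_mul, mul_add, ite_mul, mul_ite, zero_mul, mul_zero,
    Finset.sum_add_distrib, Finset.sum_ite_eq', Finset.mem_univ, if_true,
    Finset.sum_const, Finset.card_univ, Fintype.card_fin, nsmul_eq_mul]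
  by_cases h : m = m'
  · subst h; simp; ring
  · simp only [if_neg h, if_neg (fun hc : m' = m => h hc.symm)]
    push_cast; ring

lemma norm_vec_eq_one {s t : ℝ} {m : Fin 8} (h : 8*s^2 + 2*s*t + t^2 = 1) :
    ‖vec s t m‖ = 1 := by
  have h1 : ⟪vec s t m, vec s t m⟫_ℝ = 1 := by
    rw [inner_vec, if_pos rfl]; nlinarith [h]
  have h2 : ‖vec s t m‖^2 = 1 := by
    rw [← real_inner_self_eq_norm_sq, h1]
  nlinarith [norm_nonneg (vec s t m), h2]

set_option maxHeartbeats 2000000 in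
/-- There exists `u` with `0 < u < 1/8` satisfying `288u³ - 64u² - 8u + 1 = 0`, and
17 unit vectors in `EuclideanSpace ℝ (Fin 8)` whose pairwise inner products are all
at most `u`. -/
theorem exists_spherical_code_17_points_dim8 :
    ∃ u : ℝ, 0 < u ∧ u < 1/8 ∧ 288*u^3 - 64*u^2 - 8*u + 1 = 0 ∧
      ∃ x : Fin 17 → EuclideanSpace ℝ (Fin 8),
        (∀ i, ‖x i‖ = 1) ∧ ∀ i j, i ≠ j → ⟪x i, x j⟫_ℝ ≤ u := by
  -- obtain the root of the cubic
  obtain ⟨u, humem, hcube⟩ :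
      ∃ u ∈ Set.Icc (0:ℝ) (1/8), 288*u^3 - 64*u^2 - 8*u + 1 = 0 := by
    have hcont : ContinuousOn (fun u : ℝ => 288*u^3 - 64*u^2 - 8*u + 1)
        (Set.Icc 0 (1/8)) := by fun_prop
    have h := intermediate_value_Icc' (by norm_num : (0:ℝ) ≤ 1/8) hcont
    have h0 : (0:ℝ) ∈ Set.Icc ((fun u : ℝ => 288*u^3 - 64*u^2 - 8*u + 1) (1/8))
        ((fun u : ℝ => 288*u^3 - 64*u^2 - 8*u + 1) 0) := by
      constructor <;> norm_num
    obtain ⟨v, hv, hv0⟩ := h h0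
    exact ⟨v, hv, hv0⟩
  obtain ⟨hu0', hu8'⟩ := humem
  have hu0 : 0 < u := lt_of_le_of_ne hu0' (by rintro rfl; norm_num at hcube)
  have hu8 : u < 1/8 := lt_of_le_of_ne hu8'
    (by intro h; rw [h] at hcube; norm_num at hcube)
  refine ⟨u, hu0, hu8, hcube, ?_⟩
  -- a sharper upper bound on u
  have hu10 : u < 1/10 := by
    by_contra h
    push_neg at h
    nlinarith [mul_nonneg (mul_nonneg hu0.le hu0.le) hu0.le,
      mul_nonneg (sub_nonneg.2 hu8') (mul_pos hu0 hu0).le]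
  -- scalar quantities (opaque square roots)
  have h1u : (0:ℝ) < 1 - u := by linarith
  have h1u2 : (0:ℝ) < 1 - u^2 := by nlinarith
  obtain ⟨q, hq2, hq0⟩ : ∃ q : ℝ, q^2 = 1/8 ∧ 0 ≤ q :=
    ⟨Real.sqrt (1/8), Real.sq_sqrt (by norm_num), Real.sqrt_nonneg _⟩
  obtain ⟨c, hc2, hc0⟩ : ∃ c : ℝ, c^2 = 8*(1-u^2)/7 ∧ 0 ≤ c :=
    ⟨Real.sqrt (8*(1-u^2)/7), Real.sq_sqrt (by nlinarith), Real.sqrt_nonneg _⟩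
  obtain ⟨d, hd2, hd0⟩ : ∃ d : ℝ, d^2 = 1-u ∧ 0 ≤ d :=
    ⟨Real.sqrt (1-u), Real.sq_sqrt (by linarith), Real.sqrt_nonneg _⟩
  obtain ⟨β, hβ2, hβ0⟩ : ∃ b : ℝ, b^2 = (7*u+1)/8 ∧ 0 ≤ b :=
    ⟨Real.sqrt ((7*u+1)/8), Real.sq_sqrt (by linarith), Real.sqrt_nonneg _⟩
  -- key identities
  have hcd2 : (c*d)^2 = 8*(1-u^2)*(1-u)/7 := by
    rw [mul_pow, hc2, hd2]; ring
  have h2ucd : 2*u*(c*d/8) = (1-u)*(1+48*u^2)/56 := by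
    have hL0 : 0 ≤ 2*u*(c*d/8) := by positivity
    have hR0 : 0 ≤ (1-u)*(1+48*u^2)/56 := by nlinarith [sq_nonneg u]
    have hsq : (2*u*(c*d/8))^2 = ((1-u)*(1+48*u^2)/56)^2 := by
      have e1 : (2*u*(c*d/8))^2 = 4*u^2*(c*d)^2/64 := by ring
      rw [e1, hcd2]
      linear_combination (-(1-u)^2*(8*u+1)/3136) * hcube
    calc 2*u*(c*d/8) = Real.sqrt ((2*u*(c*d/8))^2) := (Real.sqrt_sq hL0).symm
      _ = Real.sqrt (((1-u)*(1+48*u^2)/56)^2) := by rw [hsq]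
      _ = (1-u)*(1+48*u^2)/56 := Real.sqrt_sq hR0
  have hcdu : 0 ≤ c*d/8 - u := by
    have h1 : 2*u*(c*d/8 - u) = (1-u)*(1+48*u^2)/56 - 2*u^2 := by
      rw [← h2ucd]; ring
    nlinarith [h1, hu0, hu10, sq_nonneg u]
  have hkey : c*d/8 - u = u*β := by
    have h1 : (c*d/8 - u)^2 = (u*β)^2 := by
      have e1 : (c*d/8 - u)^2 = (c*d)^2/64 - 2*u*(c*d/8) + u^2 := by ring
      rw [e1, hcd2, h2ucd]
      rw [show (u*β)^2 = u^2*β^2 by ring, hβ2]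
      ring
    have hR0 : 0 ≤ u*β := mul_nonneg hu0.le hβ0
    calc c*d/8 - u = Real.sqrt ((c*d/8 - u)^2) := (Real.sqrt_sq hcdu).symm
      _ = Real.sqrt ((u*β)^2) := by rw [h1]
      _ = u*β := Real.sqrt_sq hR0
  -- the configuration
  refine ⟨fun i => if i.val = 0 then vec q 0 ⟨7, by norm_num⟩
      else if i.val ≤ 8 then vec (u*q - c/8) c ⟨(i.val+7) % 8, by omega⟩
      else vec (-β*q + d/8) (-d) ⟨(i.val+7) % 8, by omega⟩, ?_, ?_⟩
  · intro i
    dsimp only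
    by_cases h0 : i.val = 0
    · rw [if_pos h0]
      exact norm_vec_eq_one (by linear_combination 8*hq2)
    · rw [if_neg h0]
      by_cases h8 : i.val ≤ 8
      · rw [if_pos h8]
        exact norm_vec_eq_one (by linear_combination 8*u^2*hq2 + (7/8)*hc2)
      · rw [if_neg h8]
        exact norm_vec_eq_one (by linear_combination 8*β^2*hq2 + hβ2 + (7/8)*hd2)
  · intro i j hij
    dsimp only
    have hij' : i.val ≠ j.val := fun h => hij (Fin.ext h)
    have hi17 := i.isLt
    have hj17 := j.isLt
    have hcd0 : 0 ≤ c*d := mul_nonneg hc0 hd0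
    have hbb : u^2 - (1-u^2)/7 ≤ u := by nlinarith
    by_cases hi0 : i.val = 0 <;> by_cases hj0 : j.val = 0
    · omega
    · rw [if_pos hi0, if_neg hj0]
      by_cases hj8 : j.val ≤ 8
      · rw [if_pos hj8, inner_vec]
        have e : 8*q*(u*q - c/8) + q*c + 0*(u*q - c/8) = u := by
          linear_combination 8*u*hq2
        split_ifs <;> linarith [e]
      · rw [if_neg hj8, inner_vec]
        have e : 8*q*(-β*q + d/8) + q*(-d) + 0*(-β*q + d/8) = -β := by
          linear_combination (-8*β)*hq2
        split_ifs <;> nlinarith [e, hβ0, hu0]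
    · rw [if_neg hi0, if_pos hj0]
      by_cases hi8 : i.val ≤ 8
      · rw [if_pos hi8, inner_vec]
        have e : 8*(u*q - c/8)*q + (u*q - c/8)*0 + c*q = u := by
          linear_combination 8*u*hq2
        split_ifs <;> linarith [e]
      · rw [if_neg hi8, inner_vec]
        have e : 8*(-β*q + d/8)*q + (-β*q + d/8)*0 + (-d)*q = -β := by
          linear_combination (-8*β)*hq2
        split_ifs <;> nlinarith [e, hβ0, hu0]
    · rw [if_neg hi0, if_neg hj0]
      by_cases hi8 : i.val ≤ 8 <;> by_cases hj8 : j.val ≤ 8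
      · -- b,b : distinct m
        rw [if_pos hi8, if_pos hj8, inner_vec]
        rw [if_neg (by simp only [Fin.mk.injEq]; omega)]
        have e : 8*(u*q - c/8)*(u*q - c/8) + (u*q - c/8)*c + c*(u*q - c/8)
            = u^2 - (1-u^2)/7 := by
          linear_combination 8*u^2*hq2 - (1/8)*hc2
        linarith [e, hbb]
      · -- b,a
        rw [if_pos hi8, if_neg hj8, inner_vec]
        have e : 8*(u*q - c/8)*(-β*q + d/8) + (u*q - c/8)*(-d) + c*(-β*q + d/8)
            = u := by
          linear_combination (-8*u*β)*hq2 + hkey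
        split_ifs with hm
        · nlinarith [e, hcd0]
        · linarith [e]
      · -- a,b
        rw [if_neg hi8, if_pos hj8, inner_vec]
        have e : 8*(-β*q + d/8)*(u*q - c/8) + (-β*q + d/8)*c + (-d)*(u*q - c/8)
            = u := by
          linear_combination (-8*u*β)*hq2 + hkey
        split_ifs with hm
        · nlinarith [e, hcd0]
        · linarith [e]
      · -- a,a : distinct m
        rw [if_neg hi8, if_neg hj8, inner_vec]
        rw [if_neg (by simp only [Fin.mk.injEq]; omega)]
        have e : 8*(-β*q + d/8)*(-β*q + d/8) + (-β*q + d/8)*(-d) + (-d)*(-β*q + d/8)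
            = u := by
          linear_combination 8*β^2*hq2 + hβ2 - (1/8)*hd2
        linarith [e]
end

section
/- There exists a real number u with 0 < u < 3/20 satisfying 175u³ − 49u² − 7u + 1 = 0, and there exist 15 unit vectors x_1, …, x_15 in EuclideanSpace ℝ (Fin 7) such that ⟨x_i, x_j⟩ ≤ u for all i ≠ j. -/
open scoped InnerProductSpace

noncomputable def Svec (i : Fin 7) : EuclideanSpace ℝ (Fin 7) := WithLp.toLp 2 (fun k => if k = i then 6 else -1)
noncomputable def Evec : EuclideanSpace ℝ (Fin 7) := WithLp.toLp 2 (fun _ => 1)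

lemma SS (i j : Fin 7) : ⟪Svec i, Svec j⟫_ℝ = if i = j then 42 else -7 := by
  simp only [PiLp.inner_apply, RCLike.inner_apply, starRingEnd_apply, star_trivial, Svec]
  fin_cases i <;> fin_cases j <;> simp [Fin.sum_univ_seven] <;> norm_num

lemma SE (i : Fin 7) : ⟪Svec i, Evec⟫_ℝ = 0 := by
  simp only [PiLp.inner_apply, RCLike.inner_apply, starRingEnd_apply, star_trivial, Svec, Evec]
  fin_cases i <;> simp [Fin.sum_univ_seven] <;> norm_num

lemma EE : ⟪Evec, Evec⟫_ℝ = 7 := by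
  simp only [PiLp.inner_apply, RCLike.inner_apply, starRingEnd_apply, star_trivial, Evec]
  simp [Fin.sum_univ_seven]

lemma ES (j : Fin 7) : ⟪Evec, Svec j⟫_ℝ = 0 := by rw [real_inner_comm]; exact SE j

noncomputable def avec (c d : ℝ) (i : Fin 7) : EuclideanSpace ℝ (Fin 7) := c • Svec i + d • Evec

lemma comb (c1 c2 d1 d2 : ℝ) (i j : Fin 7) :
    ⟪avec c1 c2 i, avec d1 d2 j⟫_ℝ =
      c1*d1*(if i = j then 42 else -7) + 7*(c2*d2) := by
  simp only [avec, inner_add_left, inner_add_right, real_inner_smul_left, real_inner_smul_right,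
    SS, SE, ES, EE]
  ring

lemma norm_eq_one_of_inner (v : EuclideanSpace ℝ (Fin 7)) (hv : ⟪v, v⟫_ℝ = 1) : ‖v‖ = 1 := by
  have h := real_inner_self_eq_norm_mul_norm v
  nlinarith [norm_nonneg v]

set_option maxHeartbeats 1000000 in
/-- There exists `u` with `0 < u < 3/20` satisfying `175u³ - 49u² - 7u + 1 = 0`, and
15 unit vectors in `EuclideanSpace ℝ (Fin 7)` whose pairwise inner products are all
at most `u`. -/
theorem exists_spherical_code_15_points_dim7 :
    ∃ u : ℝ, 0 < u ∧ u < 3/20 ∧ 175*u^3 - 49*u^2 - 7*u + 1 = 0 ∧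
      ∃ x : Fin 15 → EuclideanSpace ℝ (Fin 7),
        (∀ i, ‖x i‖ = 1) ∧ ∀ i j, i ≠ j → ⟪x i, x j⟫_ℝ ≤ u := by
  obtain ⟨u, humem, hcub⟩ :
      ∃ u ∈ Set.Icc (9/100 : ℝ) (1/10), 175*u^3 - 49*u^2 - 7*u + 1 = 0 := by
    have hc : ContinuousOn (fun x : ℝ => 175*x^3 - 49*x^2 - 7*x + 1)
        (Set.Icc (9/100) (1/10)) := by fun_prop
    have h := intermediate_value_Icc' (by norm_num : (9/100 : ℝ) ≤ 1/10) hc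
    have h0 : (0:ℝ) ∈ Set.Icc ((fun x : ℝ => 175*x^3 - 49*x^2 - 7*x + 1) (1/10))
        ((fun x : ℝ => 175*x^3 - 49*x^2 - 7*x + 1) (9/100)) := by
      norm_num
    obtain ⟨v, hv, hv0⟩ := h h0
    exact ⟨v, hv, hv0⟩
  obtain ⟨hul, huu⟩ := Set.mem_Icc.mp humem
  have hu0 : (0:ℝ) < u := by linarith
  have hu320 : u < 3/20 := by linarith
  refine ⟨u, hu0, hu320, hcub, ?_⟩
  -- scalars
  set s7 : ℝ := (Real.sqrt 7)⁻¹ with hs7def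
  set s42 : ℝ := (Real.sqrt 42)⁻¹ with hs42def
  have h7 : s7^2 = 1/7 := by
    rw [hs7def, inv_pow, Real.sq_sqrt (by norm_num : (0:ℝ) ≤ 7)]; norm_num
  have h42 : s42^2 = 1/42 := by
    rw [hs42def, inv_pow, Real.sq_sqrt (by norm_num : (0:ℝ) ≤ 42)]; norm_num
  set β : ℝ := -(4 + 7*u - 105*u^2)/(7*(1+u)) with hβdef
  have hden : (0:ℝ) < 7*(1+u) := by linarith
  have key1 : (4 + 7*u - 105*u^2)^2 = 7*(6*u+1)*(1+u)^2 := by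
    linear_combination (63*u + 9) * hcub
  have hβ2 : β^2 = (6*u+1)/7 := by
    rw [hβdef, div_pow, neg_sq, div_eq_div_iff (by positivity) (by norm_num : (7:ℝ) ≠ 0)]
    linear_combination 7 * key1
  have hβ0 : β ≤ 0 := by
    rw [hβdef]
    apply div_nonpos_of_nonpos_of_nonneg
    · nlinarith
    · linarith
  have hA0 : (0:ℝ) ≤ 6*(1-u)/7 := by linarith
  have hB0 : (0:ℝ) ≤ 1 - u^2 := by nlinarith
  set α : ℝ := Real.sqrt (6*(1-u)/7) with hαdef
  set γ : ℝ := Real.sqrt (1 - u^2) with hγdef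
  have hα2 : α^2 = 6*(1-u)/7 := Real.sq_sqrt hA0
  have hγ2 : γ^2 = 1 - u^2 := Real.sq_sqrt hB0
  have hαnn : 0 ≤ α := Real.sqrt_nonneg _
  have hγnn : 0 ≤ γ := Real.sqrt_nonneg _
  have hQpos : (0:ℝ) < 11 + 14*u - 105*u^2 := by nlinarith
  have hR0 : (0:ℝ) ≤ 6*u*(11 + 14*u - 105*u^2)/(7*(1+u)) := by
    apply div_nonneg _ (le_of_lt hden)
    nlinarith
  have hαγ : α * γ = 6*u*(11 + 14*u - 105*u^2)/(7*(1+u)) := by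
    rw [hαdef, hγdef, ← Real.sqrt_mul hA0]
    rw [show 6*(1-u)/7*(1-u^2) = (6*u*(11 + 14*u - 105*u^2)/(7*(1+u)))^2 by
      rw [div_pow, eq_div_iff (by positivity)]
      linear_combination (-(2268*u^3 + 30*u^2 - 336*u - 42)) * hcub]
    exact Real.sqrt_sq hR0
  -- the vectors
  have hPP : ⟪avec 0 s7 0, avec 0 s7 0⟫_ℝ = 1 := by
    rw [comb, if_pos rfl]; linear_combination 7 * h7
  have hAAself : ∀ m : Fin 7, ⟪avec (α*s42) (β*s7) m, avec (α*s42) (β*s7) m⟫_ℝ = 1 := by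
    intro m; rw [comb, if_pos rfl]
    linear_combination 42*α^2*h42 + 7*β^2*h7 + hα2 + hβ2
  have hBBself : ∀ m : Fin 7, ⟪avec (-(γ*s42)) (u*s7) m, avec (-(γ*s42)) (u*s7) m⟫_ℝ = 1 := by
    intro m; rw [comb, if_pos rfl]
    linear_combination 42*γ^2*h42 + 7*u^2*h7 + hγ2
  have hPA : ∀ m : Fin 7, ⟪avec 0 s7 0, avec (α*s42) (β*s7) m⟫_ℝ ≤ u := by
    intro m; rw [comb]
    have : (0:ℝ)*(α*s42)*(if (0:Fin 7) = m then 42 else -7) + 7*(s7*(β*s7)) = β := by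
      linear_combination 7*β*h7
    rw [this]; linarith
  have hPB : ∀ m : Fin 7, ⟪avec 0 s7 0, avec (-(γ*s42)) (u*s7) m⟫_ℝ ≤ u := by
    intro m; rw [comb]
    have : (0:ℝ)*(-(γ*s42))*(if (0:Fin 7) = m then 42 else -7) + 7*(s7*(u*s7)) = u := by
      linear_combination 7*u*h7
    rw [this]
  have hAA : ∀ m n : Fin 7, m ≠ n →
      ⟪avec (α*s42) (β*s7) m, avec (α*s42) (β*s7) n⟫_ℝ ≤ u := by
    intro m n hmn; rw [comb, if_neg hmn]
    have : (α*s42)*(α*s42)*(-7 : ℝ) + 7*((β*s7)*(β*s7)) = u := by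
      linear_combination (-7*α^2)*h42 + 7*β^2*h7 - (1/6)*hα2 + hβ2
    rw [this]
  have hBB : ∀ m n : Fin 7, m ≠ n →
      ⟪avec (-(γ*s42)) (u*s7) m, avec (-(γ*s42)) (u*s7) n⟫_ℝ ≤ u := by
    intro m n hmn; rw [comb, if_neg hmn]
    have : (-(γ*s42))*(-(γ*s42))*(-7 : ℝ) + 7*((u*s7)*(u*s7)) = (7*u^2 - 1)/6 := by
      linear_combination (-7*γ^2)*h42 + 7*u^2*h7 - (1/6)*hγ2
    rw [this]; nlinarith
  have hAB : ∀ m n : Fin 7,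
      ⟪avec (α*s42) (β*s7) m, avec (-(γ*s42)) (u*s7) n⟫_ℝ ≤ u := by
    intro m n; rw [comb]
    by_cases hmn : m = n
    · rw [if_pos hmn]
      have : (α*s42)*(-(γ*s42))*(42:ℝ) + 7*((β*s7)*(u*s7)) = -(α*γ) + β*u := by
        linear_combination (-42*α*γ)*h42 + 7*β*u*h7
      rw [this]
      have h1 : 0 ≤ α*γ := mul_nonneg hαnn hγnn
      have h2 : β*u ≤ 0 := mul_nonpos_of_nonpos_of_nonneg hβ0 (le_of_lt hu0)
      linarith
    · rw [if_neg hmn]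
      have : (α*s42)*(-(γ*s42))*(-7:ℝ) + 7*((β*s7)*(u*s7)) = (α*γ)/6 + β*u := by
        linear_combination 7*α*γ*h42 + 7*β*u*h7
      rw [this, hαγ, hβdef]
      rw [show 6*u*(11 + 14*u - 105*u^2)/(7*(1+u))/6 + -(4 + 7*u - 105*u^2)/(7*(1+u))*u = u by
        field_simp; ring]
  have hBA : ∀ m n : Fin 7,
      ⟪avec (-(γ*s42)) (u*s7) m, avec (α*s42) (β*s7) n⟫_ℝ ≤ u := by
    intro m n; rw [real_inner_comm]; exact hAB n m
  have hAP : ∀ m : Fin 7, ⟪avec (α*s42) (β*s7) m, avec 0 s7 0⟫_ℝ ≤ u := by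
    intro m; rw [real_inner_comm]; exact hPA m
  have hBP : ∀ m : Fin 7, ⟪avec (-(γ*s42)) (u*s7) m, avec 0 s7 0⟫_ℝ ≤ u := by
    intro m; rw [real_inner_comm]; exact hPB m
  clear_value s7 s42 β α γ
  refine ⟨![avec 0 s7 0,
    avec (α*s42) (β*s7) 0, avec (α*s42) (β*s7) 1, avec (α*s42) (β*s7) 2,
    avec (α*s42) (β*s7) 3, avec (α*s42) (β*s7) 4, avec (α*s42) (β*s7) 5,
    avec (α*s42) (β*s7) 6,
    avec (-(γ*s42)) (u*s7) 0, avec (-(γ*s42)) (u*s7) 1, avec (-(γ*s42)) (u*s7) 2,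
    avec (-(γ*s42)) (u*s7) 3, avec (-(γ*s42)) (u*s7) 4, avec (-(γ*s42)) (u*s7) 5,
    avec (-(γ*s42)) (u*s7) 6], ?_, ?_⟩
  · intro i
    fin_cases i <;>
      simp only [Matrix.cons_val_zero, Matrix.cons_val_one, Matrix.head_cons,
        Matrix.cons_val_succ]
    exacts [norm_eq_one_of_inner _ hPP,
      norm_eq_one_of_inner _ (hAAself 0),
      norm_eq_one_of_inner _ (hAAself 1),
      norm_eq_one_of_inner _ (hAAself 2),
      norm_eq_one_of_inner _ (hAAself 3),
      norm_eq_one_of_inner _ (hAAself 4),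
      norm_eq_one_of_inner _ (hAAself 5),
      norm_eq_one_of_inner _ (hAAself 6),
      norm_eq_one_of_inner _ (hBBself 0),
      norm_eq_one_of_inner _ (hBBself 1),
      norm_eq_one_of_inner _ (hBBself 2),
      norm_eq_one_of_inner _ (hBBself 3),
      norm_eq_one_of_inner _ (hBBself 4),
      norm_eq_one_of_inner _ (hBBself 5),
      norm_eq_one_of_inner _ (hBBself 6)]
  · intro i j hij
    fin_cases i <;> fin_cases j <;>
      simp only [Matrix.cons_val_zero, Matrix.cons_val_one, Matrix.head_cons,
        Matrix.cons_val_succ]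
    exacts [absurd rfl hij,
      hPA 0,
      hPA 1,
      hPA 2,
      hPA 3,
      hPA 4,
      hPA 5,
      hPA 6,
      hPB 0,
      hPB 1,
      hPB 2,
      hPB 3,
      hPB 4,
      hPB 5,
      hPB 6,
      hAP 0,
      absurd rfl hij,
      hAA 0 1 (by decide),
      hAA 0 2 (by decide),
      hAA 0 3 (by decide),
      hAA 0 4 (by decide),
      hAA 0 5 (by decide),
      hAA 0 6 (by decide),
      hAB 0 0,
      hAB 0 1,
      hAB 0 2,
      hAB 0 3,
      hAB 0 4,
      hAB 0 5,
      hAB 0 6,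
      hAP 1,
      hAA 1 0 (by decide),
      absurd rfl hij,
      hAA 1 2 (by decide),
      hAA 1 3 (by decide),
      hAA 1 4 (by decide),
      hAA 1 5 (by decide),
      hAA 1 6 (by decide),
      hAB 1 0,
      hAB 1 1,
      hAB 1 2,
      hAB 1 3,
      hAB 1 4,
      hAB 1 5,
      hAB 1 6,
      hAP 2,
      hAA 2 0 (by decide),
      hAA 2 1 (by decide),
      absurd rfl hij,
      hAA 2 3 (by decide),
      hAA 2 4 (by decide),
      hAA 2 5 (by decide),
      hAA 2 6 (by decide),
      hAB 2 0,
      hAB 2 1,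
      hAB 2 2,
      hAB 2 3,
      hAB 2 4,
      hAB 2 5,
      hAB 2 6,
      hAP 3,
      hAA 3 0 (by decide),
      hAA 3 1 (by decide),
      hAA 3 2 (by decide),
      absurd rfl hij,
      hAA 3 4 (by decide),
      hAA 3 5 (by decide),
      hAA 3 6 (by decide),
      hAB 3 0,
      hAB 3 1,
      hAB 3 2,
      hAB 3 3,
      hAB 3 4,
      hAB 3 5,
      hAB 3 6,
      hAP 4,
      hAA 4 0 (by decide),
      hAA 4 1 (by decide),
      hAA 4 2 (by decide),
      hAA 4 3 (by decide),
      absurd rfl hij,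
      hAA 4 5 (by decide),
      hAA 4 6 (by decide),
      hAB 4 0,
      hAB 4 1,
      hAB 4 2,
      hAB 4 3,
      hAB 4 4,
      hAB 4 5,
      hAB 4 6,
      hAP 5,
      hAA 5 0 (by decide),
      hAA 5 1 (by decide),
      hAA 5 2 (by decide),
      hAA 5 3 (by decide),
      hAA 5 4 (by decide),
      absurd rfl hij,
      hAA 5 6 (by decide),
      hAB 5 0,
      hAB 5 1,
      hAB 5 2,
      hAB 5 3,
      hAB 5 4,
      hAB 5 5,
      hAB 5 6,
      hAP 6,
      hAA 6 0 (by decide),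
      hAA 6 1 (by decide),
      hAA 6 2 (by decide),
      hAA 6 3 (by decide),
      hAA 6 4 (by decide),
      hAA 6 5 (by decide),
      absurd rfl hij,
      hAB 6 0,
      hAB 6 1,
      hAB 6 2,
      hAB 6 3,
      hAB 6 4,
      hAB 6 5,
      hAB 6 6,
      hBP 0,
      hBA 0 0,
      hBA 0 1,
      hBA 0 2,
      hBA 0 3,
      hBA 0 4,
      hBA 0 5,
      hBA 0 6,
      absurd rfl hij,
      hBB 0 1 (by decide),
      hBB 0 2 (by decide),
      hBB 0 3 (by decide),
      hBB 0 4 (by decide),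
      hBB 0 5 (by decide),
      hBB 0 6 (by decide),
      hBP 1,
      hBA 1 0,
      hBA 1 1,
      hBA 1 2,
      hBA 1 3,
      hBA 1 4,
      hBA 1 5,
      hBA 1 6,
      hBB 1 0 (by decide),
      absurd rfl hij,
      hBB 1 2 (by decide),
      hBB 1 3 (by decide),
      hBB 1 4 (by decide),
      hBB 1 5 (by decide),
      hBB 1 6 (by decide),
      hBP 2,
      hBA 2 0,
      hBA 2 1,
      hBA 2 2,
      hBA 2 3,
      hBA 2 4,
      hBA 2 5,
      hBA 2 6,
      hBB 2 0 (by decide),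
      hBB 2 1 (by decide),
      absurd rfl hij,
      hBB 2 3 (by decide),
      hBB 2 4 (by decide),
      hBB 2 5 (by decide),
      hBB 2 6 (by decide),
      hBP 3,
      hBA 3 0,
      hBA 3 1,
      hBA 3 2,
      hBA 3 3,
      hBA 3 4,
      hBA 3 5,
      hBA 3 6,
      hBB 3 0 (by decide),
      hBB 3 1 (by decide),
      hBB 3 2 (by decide),
      absurd rfl hij,
      hBB 3 4 (by decide),
      hBB 3 5 (by decide),
      hBB 3 6 (by decide),
      hBP 4,
      hBA 4 0,
      hBA 4 1,
      hBA 4 2,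
      hBA 4 3,
      hBA 4 4,
      hBA 4 5,
      hBA 4 6,
      hBB 4 0 (by decide),
      hBB 4 1 (by decide),
      hBB 4 2 (by decide),
      hBB 4 3 (by decide),
      absurd rfl hij,
      hBB 4 5 (by decide),
      hBB 4 6 (by decide),
      hBP 5,
      hBA 5 0,
      hBA 5 1,
      hBA 5 2,
      hBA 5 3,
      hBA 5 4,
      hBA 5 5,
      hBA 5 6,
      hBB 5 0 (by decide),
      hBB 5 1 (by decide),
      hBB 5 2 (by decide),
      hBB 5 3 (by decide),
      hBB 5 4 (by decide),
      absurd rfl hij,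
      hBB 5 6 (by decide),
      hBP 6,
      hBA 6 0,
      hBA 6 1,
      hBA 6 2,
      hBA 6 3,
      hBA 6 4,
      hBA 6 5,
      hBA 6 6,
      hBB 6 0 (by decide),
      hBB 6 1 (by decide),
      hBB 6 2 (by decide),
      hBB 6 3 (by decide),
      hBB 6 4 (by decide),
      hBB 6 5 (by decide),
      absurd rfl hij]
end
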